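/- arXiv:1402.4714 — 8 statements merged into one kernel-verified Lean document; each statement's English description precedes it below -/
import Mathlib

section
/- Let H be a Hopf algebra over a field k, B a left H-module algebra with basis {1, n} satisfying n^2 = ϖ·1 for ϖ ∈ k, and suppose h·1 = ε(h)·1 for all h ∈ H. Define α, β ∈ H* by h·n = β(h)·1 + α(h)·n. Then in the convolution algebra H*: β * α = -(α * β), and β * β = ϖ·(ε - α * α). -/
open TensorProduct

/-- The convolution product on the dual of a coalgebra. -/
noncomputable def conv {k H : Type} [CommRing k] [AddCommGroup H] [Module k H]
    [Coalgebra k H] (φ ψ : H →ₗ[k] k) : H →ₗ[k] k :=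
  LinearMap.mul' k k ∘ₗ TensorProduct.map φ ψ ∘ₗ Coalgebra.comul

lemma key_aux {k H B : Type} [CommRing k] [AddCommGroup H] [Module k H]
    [Ring B] [Algebra k B] (f g : H →ₗ[k] k) (b b' : B) (t : H ⊗[k] H) :
    LinearMap.mul' k B (TensorProduct.map (f.smulRight b) (g.smulRight b') t) =
      LinearMap.mul' k k (TensorProduct.map f g t) • (b * b') := by
  induction t using TensorProduct.induction_on with
  | zero => simp
  | tmul x y =>
      simp [LinearMap.mul'_apply, smul_smul, smul_mul_assoc, mul_smul_comm, mul_comm]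
  | add x y hx hy => simp [hx, hy, add_smul]

/-- Let `H` be a Hopf algebra over a field `k`, `B` a left `H`-module
algebra with basis `{1, n}` satisfying `n² = ϖ•1`, and suppose `h·1 = ε(h)•1` for all `h`.
Define `α, β ∈ H*` by `h·n = β(h)•1 + α(h)•n`.  Then in the convolution algebra `H*` we have
`β * α = -(α * β)` and `β * β = ϖ • (ε - α * α)`. -/
theorem stmt1 (k H B : Type) [Field k] [Ring H] [HopfAlgebra k H]
    [Ring B] [Algebra k B]
    (act : H →ₗ[k] B →ₗ[k] B)
    (hact_one : ∀ h h' : H, act (h * h') = act h ∘ₗ act h') (hact_id : act 1 = LinearMap.id)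
    (hma1 : ∀ h : H, act h 1 = (Coalgebra.counit (R := k) h : k) • (1 : B))
    (hma : ∀ (h : H) (b b' : B), act h (b * b') =
      LinearMap.mul' k B ((TensorProduct.map (act.flip b) (act.flip b')) (Coalgebra.comul h)))
    (c : Module.Basis (Fin 2) k B) (hc0 : c 0 = 1) (n : B) (hn : n = c 1)
    (ϖ : k) (hϖ : n * n = ϖ • (1 : B))
    (α β : H →ₗ[k] k)
    (hdef : ∀ h : H, act h n = β h • (1 : B) + α h • n) :
    conv β α = - conv α β ∧
    conv β β = ϖ • (Coalgebra.counit - conv α α) := by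
  have hflip : act.flip n = β.smulRight (1 : B) + α.smulRight n := by
    ext h; simp [hdef h]
  have main : ∀ h : H,
      (conv β β h + ϖ * conv α α h) • c 0 + (conv β α h + conv α β h) • c 1 =
        (ϖ * Coalgebra.counit (R := k) h) • c 0 := by
    intro h
    have h1 := hma h n n
    rw [hϖ, map_smul, hma1 h, hflip] at h1
    rw [TensorProduct.map_add_left, TensorProduct.map_add_right,
      TensorProduct.map_add_right] at h1
    simp only [LinearMap.add_apply, map_add, key_aux] at h1
    have hϖ' : n * n = ϖ • c 0 := by rw [hϖ, hc0]
    rw [one_mul, mul_one, one_mul, hϖ'] at h1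
    have hcv : ∀ f g : H →ₗ[k] k, LinearMap.mul' k k
        (TensorProduct.map f g (Coalgebra.comul h)) = conv f g h := fun f g => rfl
    rw [hcv, hcv, hcv, hcv] at h1
    rw [hn, ← hc0] at h1
    rw [mul_smul, h1]
    module
  have h0 : ∀ h : H, conv β β h + ϖ * conv α α h = ϖ * Coalgebra.counit (R := k) h := by
    intro h
    have := congrArg (fun x => c.repr x 0) (main h)
    simpa [Finsupp.single_apply] using this
  have h1 : ∀ h : H, conv β α h + conv α β h = 0 := by
    intro h
    have := congrArg (fun x => c.repr x 1) (main h)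
    simpa [Finsupp.single_apply] using this
  constructor
  · ext h
    have := h1 h
    simp only [LinearMap.neg_apply]
    linear_combination h1 h
  · ext h
    have := h0 h
    simp only [LinearMap.smul_apply, LinearMap.sub_apply, smul_eq_mul]
    linear_combination h0 h
end

section
/- Let H be a Hopf algebra over a field k of characteristic not 2, B a 2-dimensional left H-module algebra and H-module coalgebra with basis {1, n}, n^2 = ϖ·1, such that 1 is grouplike and h·1 = ε(h)·1 for all h. If the functional β defined by h·n = β(h)·1 + α(h)·n satisfies β = ε(n)(ε - α) with α an invertible algebra map, then β = 0, i.e. h·n = α(h)·n for all h ∈ H. -/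
open TensorProduct

section ConvAux

variable {k H : Type} [CommRing k] [AddCommGroup H] [Module k H] [Coalgebra k H]

open Coalgebra in
lemma conv_repr (φ ψ : H →ₗ[k] k) (a : H) {ι : Type} (r : Coalgebra.Repr k a ι) :
    conv φ ψ a = ∑ i ∈ r.index, φ (r.left i) * ψ (r.right i) := by
  simp only [conv, LinearMap.comp_apply, ← r.eq, map_sum, TensorProduct.map_tmul,
    LinearMap.mul'_apply]

open Coalgebra in
lemma conv_counit_left (φ : H →ₗ[k] k) :
    conv (Coalgebra.counit (R := k) (A := H)) φ = φ := by
  ext a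
  set r := Coalgebra.Repr.arbitrary k a with hr
  rw [conv_repr _ _ a r]
  have key := congrArg (fun x => φ ((TensorProduct.lid k H) x))
    (Coalgebra.sum_counit_tmul_eq (R := k) r)
  simp only [map_sum, TensorProduct.lid_tmul, map_smul, smul_eq_mul, one_smul] at key
  exact key

open Coalgebra in
lemma conv_counit_right (φ : H →ₗ[k] k) :
    conv φ (Coalgebra.counit (R := k) (A := H)) = φ := by
  ext a
  set r := Coalgebra.Repr.arbitrary k a with hr
  rw [conv_repr _ _ a r]
  have key := congrArg (fun x => φ ((TensorProduct.rid k H) x))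
    (Coalgebra.sum_tmul_counit_eq (R := k) r)
  simp only [map_sum, TensorProduct.rid_tmul, map_smul, smul_eq_mul, one_smul] at key
  rw [← key]
  exact Finset.sum_congr rfl fun i _ => mul_comm _ _

lemma conv_zero_left (ψ : H →ₗ[k] k) : conv (0 : H →ₗ[k] k) ψ = 0 := by
  ext a
  simp [conv_repr _ _ a (Coalgebra.Repr.arbitrary k a)]

lemma conv_sub_left (φ φ' ψ : H →ₗ[k] k) :
    conv (φ - φ') ψ = conv φ ψ - conv φ' ψ := by
  ext a
  simp [conv_repr _ _ a (Coalgebra.Repr.arbitrary k a), sub_mul, Finset.sum_sub_distrib]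

lemma conv_sub_right (φ ψ ψ' : H →ₗ[k] k) :
    conv φ (ψ - ψ') = conv φ ψ - conv φ ψ' := by
  ext a
  simp [conv_repr _ _ a (Coalgebra.Repr.arbitrary k a), mul_sub, Finset.sum_sub_distrib]

lemma conv_smul_left (c : k) (φ ψ : H →ₗ[k] k) :
    conv (c • φ) ψ = c • conv φ ψ := by
  ext a
  simp [conv_repr _ _ a (Coalgebra.Repr.arbitrary k a), Finset.mul_sum, mul_assoc]

lemma conv_smul_right (c : k) (φ ψ : H →ₗ[k] k) :
    conv φ (c • ψ) = c • conv φ ψ := by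
  ext a
  simp [conv_repr _ _ a (Coalgebra.Repr.arbitrary k a), Finset.mul_sum]
  ring_nf
  simp [mul_comm, mul_left_comm]

lemma mul'_assoc_aux :
    (LinearMap.mul' k k) ∘ₗ (LinearMap.rTensor k (LinearMap.mul' k k)) ∘ₗ
        (TensorProduct.assoc k k k k).symm.toLinearMap =
      (LinearMap.mul' k k) ∘ₗ (LinearMap.lTensor k (LinearMap.mul' k k)) := by
  apply TensorProduct.ext
  apply LinearMap.ext; intro x
  apply TensorProduct.ext'
  intro y z
  simp [mul_assoc]

lemma conv_assoc (φ ψ χ : H →ₗ[k] k) :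
    conv (conv φ ψ) χ = conv φ (conv ψ χ) := by
  have step1 : conv (conv φ ψ) χ =
      (LinearMap.mul' k k) ∘ₗ (LinearMap.rTensor k (LinearMap.mul' k k)) ∘ₗ
        (TensorProduct.map (TensorProduct.map φ ψ) χ) ∘ₗ
        (LinearMap.rTensor H (Coalgebra.comul (R := k))) ∘ₗ Coalgebra.comul := by
    unfold conv
    have : TensorProduct.map
        ((LinearMap.mul' k k) ∘ₗ TensorProduct.map φ ψ ∘ₗ Coalgebra.comul) χ =
        (LinearMap.rTensor k (LinearMap.mul' k k)) ∘ₗ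
          (TensorProduct.map (TensorProduct.map φ ψ) χ) ∘ₗ
          (LinearMap.rTensor H (Coalgebra.comul (R := k))) := by
      rw [LinearMap.rTensor, LinearMap.rTensor, ← TensorProduct.map_comp,
        ← TensorProduct.map_comp]
      simp [LinearMap.comp_assoc]
    rw [this, LinearMap.comp_assoc, LinearMap.comp_assoc]
  have step2 : conv φ (conv ψ χ) =
      (LinearMap.mul' k k) ∘ₗ (LinearMap.lTensor k (LinearMap.mul' k k)) ∘ₗ
        (TensorProduct.map φ (TensorProduct.map ψ χ)) ∘ₗ
        (LinearMap.lTensor H (Coalgebra.comul (R := k))) ∘ₗ Coalgebra.comul := by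
    unfold conv
    have : TensorProduct.map φ
        ((LinearMap.mul' k k) ∘ₗ TensorProduct.map ψ χ ∘ₗ Coalgebra.comul) =
        (LinearMap.lTensor k (LinearMap.mul' k k)) ∘ₗ
          (TensorProduct.map φ (TensorProduct.map ψ χ)) ∘ₗ
          (LinearMap.lTensor H (Coalgebra.comul (R := k))) := by
      rw [LinearMap.lTensor, LinearMap.lTensor, ← TensorProduct.map_comp,
        ← TensorProduct.map_comp]
      simp [LinearMap.comp_assoc]
    rw [this, LinearMap.comp_assoc, LinearMap.comp_assoc]
  rw [step1, step2]
  have hco : (LinearMap.rTensor H (Coalgebra.comul (R := k))) ∘ₗ Coalgebra.comul =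
      (TensorProduct.assoc k H H H).symm.toLinearMap ∘ₗ
        (LinearMap.lTensor H (Coalgebra.comul (R := k))) ∘ₗ Coalgebra.comul := by
    rw [← LinearMap.comp_assoc]
    exact (Coalgebra.coassoc_symm (R := k) (A := H)).symm
  rw [hco]
  have hnat : ∀ (X : Type) [AddCommGroup X] [Module k X] (f : X →ₗ[k] H ⊗[k] (H ⊗[k] H)),
      (TensorProduct.map (TensorProduct.map φ ψ) χ) ∘ₗ
        ((TensorProduct.assoc k H H H).symm.toLinearMap ∘ₗ f) =
      (TensorProduct.assoc k k k k).symm.toLinearMap ∘ₗ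
        ((TensorProduct.map φ (TensorProduct.map ψ χ)) ∘ₗ f) := by
    intro X _ _ f
    rw [← LinearMap.comp_assoc, TensorProduct.map_map_comp_assoc_symm_eq,
      LinearMap.comp_assoc]
  rw [hnat]
  have hmul : ∀ (X : Type) [AddCommGroup X] [Module k X] (f : X →ₗ[k] k ⊗[k] (k ⊗[k] k)),
      (LinearMap.mul' k k) ∘ₗ (LinearMap.rTensor k (LinearMap.mul' k k)) ∘ₗ
        ((TensorProduct.assoc k k k k).symm.toLinearMap ∘ₗ f) =
      (LinearMap.mul' k k) ∘ₗ (LinearMap.lTensor k (LinearMap.mul' k k)) ∘ₗ f := by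
    intro X _ _ f
    calc (LinearMap.mul' k k) ∘ₗ (LinearMap.rTensor k (LinearMap.mul' k k)) ∘ₗ
          ((TensorProduct.assoc k k k k).symm.toLinearMap ∘ₗ f)
        = ((LinearMap.mul' k k) ∘ₗ (LinearMap.rTensor k (LinearMap.mul' k k)) ∘ₗ
            (TensorProduct.assoc k k k k).symm.toLinearMap) ∘ₗ f := by
          simp only [LinearMap.comp_assoc]
      _ = ((LinearMap.mul' k k) ∘ₗ (LinearMap.lTensor k (LinearMap.mul' k k))) ∘ₗ f := by
          rw [mul'_assoc_aux]
      _ = (LinearMap.mul' k k) ∘ₗ (LinearMap.lTensor k (LinearMap.mul' k k)) ∘ₗ f := by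
          simp only [LinearMap.comp_assoc]
  rw [hmul]

end ConvAux

/-- Let `H` be a Hopf algebra over a field `k` of characteristic not 2, and
`B` a 2-dimensional left `H`-module algebra and `H`-module coalgebra with basis `{1, n}`,
`n² = ϖ•1`, `1` grouplike and `h·1 = ε(h)•1`.  If the functional `β` defined by
`h·n = β(h)•1 + α(h)•n` satisfies `β = ε_B(n)(ε - α)` with `α` a convolution-invertible
algebra map, and `β * α = -(α * β)` (from the module-algebra structure), then `β = 0`,
i.e. `h·n = α(h)•n` for all `h ∈ H`. -/
theorem stmt2 (k H B : Type) [Field k] (hchar : ringChar k ≠ 2)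
    [Ring H] [HopfAlgebra k H] [Ring B] [Algebra k B]
    (act : H →ₗ[k] B →ₗ[k] B)
    (c : Module.Basis (Fin 2) k B) (hc0 : c 0 = 1) (n : B) (hn : n = c 1)
    (ϖ : k) (hϖ : n * n = ϖ • (1 : B))
    (α β : H →ₗ[k] k)
    (hα1 : α 1 = 1) (hαmul : ∀ h h' : H, α (h * h') = α h * α h')
    (hαinv : ∃ α' : H →ₗ[k] k,
      conv α α' = Coalgebra.counit ∧ conv α' α = Coalgebra.counit)
    (hdef : ∀ h : H, act h n = β h • (1 : B) + α h • n)
    (hanti : conv β α = - conv α β)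
    (εB : B →ₗ[k] k) (hεB1 : εB 1 = 1)
    (hβ : β = εB n • (Coalgebra.counit (R := k) (A := H) - α)) :
    β = 0 ∧ ∀ h : H, act h n = α h • n := by
  obtain ⟨α', hαα', hα'α⟩ := hαinv
  -- conv β α = conv α β
  have hβα : conv β α = εB n • (α - conv α α) := by
    rw [hβ, conv_smul_left, conv_sub_left, conv_counit_left]
  have hαβ : conv α β = εB n • (α - conv α α) := by
    rw [hβ, conv_smul_right, conv_sub_right, conv_counit_right]
  have h2 : (2 : k) • (εB n • (α - conv α α)) = 0 := by
    have := hanti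
    rw [hβα, hαβ] at this
    rw [two_smul]
    nth_rewrite 1 [this]
    simp
  have h2ne : (2 : k) ≠ 0 := Ring.two_ne_zero hchar
  have hconvβα : conv β α = 0 := by
    rw [hβα]
    exact (smul_eq_zero.mp h2).resolve_left h2ne
  have hβ0 : β = 0 := by
    calc β = conv β Coalgebra.counit := (conv_counit_right β).symm
    _ = conv β (conv α α') := by rw [hαα']
    _ = conv (conv β α) α' := (conv_assoc β α α').symm
    _ = 0 := by rw [hconvβα, conv_zero_left]
  refine ⟨hβ0, fun h => ?_⟩
  rw [hdef h, hβ0]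
  simp
end

section
/- Let G be a finite abelian group of order n acting on a k-algebra B that is a finite product of copies of k (with k containing a primitive n-th root of unity), via algebra automorphisms. Let F be the basis of primitive orthogonal idempotents of B. Then G permutes F, every G-orbit length in F divides |G|, and the smash product B # k[G] is a semisimple algebra isomorphic to ⊕_{ℓ=1}^t (|G|/n_ℓ) · M_{n_ℓ}(k), where n_1, …, n_t are the lengths of the G-orbits of F. -/
open Module in
lemma charSum_eq_zero {k H : Type*} [Field k] [CommGroup H] [Fintype H]
    (e : (H →* kˣ) ≃ H) (c : H → k)
    (hc : ∀ χ : H →* kˣ, ∑ h, c h * ((χ h : kˣ) : k) = 0) : c = 0 := by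
  classical
  letI : Fintype (H →* kˣ) := Fintype.ofEquiv _ e.symm
  have hcard : Fintype.card (H →* kˣ) = Fintype.card H := Fintype.card_congr e
  set v : (H →* kˣ) → (H → k) := fun χ h => ((χ h : kˣ) : k) with hv
  have hinj : Function.Injective (fun χ : H →* kˣ => (Units.coeHom k).comp χ) := by
    intro χ₁ χ₂ h12
    ext x
    have := congrArg (fun φ : H →* k => φ x) h12
    exact this
  have hli : LinearIndependent k v := by
    have := (linearIndependent_monoidHom H k).comp _ hinj
    exact this
  have hsp : Submodule.span k (Set.range v) = ⊤ := by
    refine hli.span_eq_top_of_card_eq_finrank ?_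
    rw [hcard, Module.finrank_pi]
  -- the functional
  let φ : (H → k) →ₗ[k] k := ∑ h : H, c h • (LinearMap.proj h)
  have hφ : ∀ x, φ x = ∑ h, c h * x h := by
    intro x
    simp [φ, LinearMap.sum_apply, Finset.sum_apply]
  have hφ0 : φ = 0 := by
    have h1 : ∀ x ∈ Set.range v, φ x = 0 := by
      rintro x ⟨χ, rfl⟩
      rw [hφ]; exact hc χ
    refine LinearMap.ext fun x => ?_
    simp only [LinearMap.zero_apply]
    have hx : x ∈ Submodule.span k (Set.range v) := by rw [hsp]; trivial
    refine Submodule.span_induction (fun y hy => h1 y hy) (map_zero φ) ?_ ?_ hx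
    · intro y z _ _ hy hz; rw [map_add, hy, hz, add_zero]
    · intro a y _ hy; rw [map_smul, hy, smul_zero]
  funext h
  have := congrArg (fun ψ : (H → k) →ₗ[k] k => ψ (Pi.single h 1)) hφ0
  simp only [hφ, LinearMap.zero_apply] at this
  rw [Finset.sum_eq_single h (fun b _ hb => by simp [Pi.single_apply, hb]) (by simp)] at this
  simpa using this

lemma matrix_isSemisimpleRing (k : Type*) [Field k] (m : ℕ) :
    IsSemisimpleRing (Matrix (Fin m) (Fin m) k) := by
  classical
  set R := Matrix (Fin m) (Fin m) k with hR
  have htss : ∀ (j : Fin m) (y : R),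
      LinearMap.toSpanSingleton R R (Matrix.single j j 1) y
        = y * Matrix.single j j 1 := by
    intro j y
    simp [LinearMap.toSpanSingleton_apply, smul_eq_mul]
  let p : Fin m → Submodule R R := fun j =>
    LinearMap.range (LinearMap.toSpanSingleton R R (Matrix.single j j 1))
  have hmem : ∀ j (x : R), x ∈ p j ↔ x * Matrix.single j j 1 = x := by
    intro j x
    constructor
    · rintro ⟨y, rfl⟩
      rw [htss, mul_assoc, Matrix.single_mul_single_same, mul_one]
    · intro h
      exact ⟨x, (htss j x).trans h⟩
  have hcol : ∀ j (x : R), x ∈ p j → ∀ i j', j' ≠ j → x i j' = 0 := by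
    intro j x hx i j' hj'
    rw [← (hmem j x).mp hx]
    rw [Matrix.mul_apply]
    apply Finset.sum_eq_zero
    intro l _
    simp [Matrix.single, hj'.symm]
  have hsimple : ∀ j, IsSimpleModule R (p j) := by
    intro j
    rw [isSimpleModule_iff_isAtom]
    constructor
    · intro hbot
      have : (Matrix.single j j 1 : R) ∈ p j := ⟨1, by rw [htss, one_mul]⟩
      rw [hbot, Submodule.mem_bot] at this
      have := congrFun (congrFun this j) j
      simp [Matrix.single] at this
    · intro b hb
      by_contra hbot
      obtain ⟨x, hxb, hx0⟩ := Submodule.exists_mem_ne_zero_of_ne_bot hbot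
      have hxpj : x ∈ p j := hb.le hxb
      obtain ⟨i₀, j₀, hij⟩ : ∃ i₀ j₀, x i₀ j₀ ≠ 0 := by
        by_contra hall
        push_neg at hall
        refine hx0 ?_
        ext i j'
        rw [hall]
        rfl
      have hj₀ : j₀ = j := by
        by_contra hne
        exact hij (hcol j x hxpj i₀ j₀ hne)
      rw [hj₀] at hij
      have hple : p j ≤ b := by
        intro y hy
        set z : R := y * Matrix.single j i₀ ((x i₀ j)⁻¹) with hz
        have hzval : ∀ i l, z i l = if l = i₀ then y i j * (x i₀ j)⁻¹ else 0 := by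
          intro i l
          rw [hz, Matrix.mul_apply]
          by_cases hl : l = i₀
          · subst hl
            rw [Finset.sum_eq_single j] <;>
              simp +contextual [Matrix.single, eq_comm]
          · rw [if_neg hl]
            apply Finset.sum_eq_zero
            intro t _
            simp [Matrix.single, hl, Ne.symm hl]
        have key : y = z • x := by
          show y = z * x
          ext i j'
          rw [Matrix.mul_apply, Finset.sum_eq_single i₀]
          · rw [hzval, if_pos rfl]
            by_cases hj' : j' = j
            · subst hj'
              rw [mul_assoc, inv_mul_cancel₀ hij, mul_one]
            · rw [hcol j y hy i j' hj', hcol j x hxpj i₀ j' hj', mul_zero]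
          · intro l _ hl
            rw [hzval, if_neg hl, zero_mul]
          · simp
        rw [key]
        exact Submodule.smul_mem _ _ hxb
      exact hb.ne (le_antisymm hb.le hple)
  have htop : ⨆ j, p j = ⊤ := by
    rw [eq_top_iff]
    intro x _
    have hx : x = ∑ j, x * Matrix.single j j 1 := by
      ext i j'
      rw [Matrix.sum_apply]
      have hterm : ∀ l : Fin m,
          (x * (Matrix.single l l 1 : R)) i j' = if l = j' then x i j' else 0 := by
        intro l
        rw [Matrix.mul_apply]
        by_cases hl : l = j'
        · subst hl
          rw [if_pos rfl, Finset.sum_eq_single l]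
          · simp [Matrix.single]
          · intro t _ ht
            simp [Matrix.single, Ne.symm ht]
          · simp
        · rw [if_neg hl]
          apply Finset.sum_eq_zero
          intro t _
          simp [Matrix.single, hl]
      rw [Finset.sum_congr rfl (fun l _ => hterm l)]
      simp
    rw [hx]
    apply Submodule.sum_mem
    intro j _
    exact Submodule.mem_iSup_of_mem j
      ((hmem j _).mpr (by rw [mul_assoc, Matrix.single_mul_single_same, mul_one]))
  exact isSemisimpleModule_of_isSemisimpleModule_submodule'
    (fun j => by haveI := hsimple j; infer_instance) htop

namespace Smash12

set_option linter.unusedSectionVars false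
attribute [local instance] Classical.propDecidable

open MulAction

variable {k G F : Type} [Field k] [CommGroup G] [Fintype G] [Fintype F] [DecidableEq F]
  [MulAction G F]

noncomputable instance (o : orbitRel.Quotient G F) : Fintype o.orbit :=
  o.orbit.toFinite.fintype

variable (G) in
/-- chosen representative of an orbit -/
noncomputable def rep (o : orbitRel.Quotient G F) : F := o.out

lemma orbit_eq (o : orbitRel.Quotient G F) : o.orbit = MulAction.orbit G (rep G o) :=
  orbitRel.Quotient.orbit_eq_orbit_out o Quotient.out_eq'

variable (G) in
/-- class of an element -/
def mk (f : F) : orbitRel.Quotient G F := Quotient.mk'' f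

lemma mem_orbit_iff_mk {f : F} {o : orbitRel.Quotient G F} : f ∈ o.orbit ↔ mk G f = o :=
  orbitRel.Quotient.mem_orbit

lemma mk_smul (g : G) (f : F) : mk G (g • f) = mk G f :=
  Quotient.sound' (MulAction.mem_orbit f g)

lemma smul_mem_orbit {f : F} {o : orbitRel.Quotient G F} (h : f ∈ o.orbit) (g : G) :
    g • f ∈ o.orbit := by
  rw [mem_orbit_iff_mk, mk_smul]
  exact mem_orbit_iff_mk.mp h

lemma exists_smul_rep (f : F) : ∃ g : G, g • rep G (mk G f) = f := by
  have h : f ∈ (mk G f).orbit := mem_orbit_iff_mk.mpr rfl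
  rw [orbit_eq] at h
  exact MulAction.mem_orbit_iff.mp h

variable (G) in
/-- chosen section -/
noncomputable def sig (f : F) : G := (exists_smul_rep f).choose

lemma sig_spec (f : F) : sig G f • rep G (mk G f) = f := (exists_smul_rep f).choose_spec

variable (G) in
/-- stabilizer of representative -/
noncomputable def HH (o : orbitRel.Quotient G F) : Subgroup G := MulAction.stabilizer G (rep G o)

variable (G) in
/-- cocycle -/
noncomputable def ww (f : F) (g : G) : G := (sig G f)⁻¹ * g * sig G (g⁻¹ • f)

lemma ww_mem (f : F) (g : G) : ww G f g ∈ HH G (mk G f) := by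
  show ww G f g • rep G (mk G f) = rep G (mk G f)
  have h1 : sig G (g⁻¹ • f) • rep G (mk G f) = g⁻¹ • f := by
    have := sig_spec (G := G) (g⁻¹ • f)
    rwa [mk_smul] at this
  simp only [ww, mul_smul, h1]
  rw [smul_inv_smul, inv_smul_eq_iff]
  exact (sig_spec f).symm

lemma ww_mul (f : F) (g g' : G) : ww G f g * ww G (g⁻¹ • f) g' = ww G f (g * g') := by
  simp only [ww, mul_inv_rev, mul_smul]
  group

lemma ww_one (f : F) : ww G f 1 = 1 := by
  simp only [ww, inv_smul_eq_iff, one_smul, inv_one]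
  group

lemma ww_eq (f : F) (g : G) : ww G f g = (sig G f)⁻¹ * g * sig G (g⁻¹ • f) := rfl

lemma sig_mul_ww (f : F) (g : G) :
    sig G f * ww G f g * (sig G (g⁻¹ • f))⁻¹ = g := by
  simp only [ww]
  group

variable (k G F) in
/-- the model algebra -/
abbrev CC : Type := ∀ o : orbitRel.Quotient G F,
  (↥(HH G (F := F) o) →* kˣ) → Matrix o.orbit o.orbit k

noncomputable instance : Ring (CC k G F) := by infer_instance
noncomputable instance : Algebra k (CC k G F) := by infer_instance

variable (k) in
/-- structure constants -/
noncomputable def TT (p : F × G) : CC k G F := fun o χ =>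
  if h : p.1 ∈ o.orbit then
    Matrix.single ⟨p.1, h⟩ ⟨p.2⁻¹ • p.1, smul_mem_orbit h p.2⁻¹⟩
      ((χ ⟨ww G p.1 p.2, mem_orbit_iff_mk.mp h ▸ ww_mem p.1 p.2⟩ : kˣ) : k)
  else 0

end Smash12

namespace Smash12

set_option linter.unusedSectionVars false

variable {k G F : Type} [Field k] [CommGroup G] [Fintype G] [Fintype F] [DecidableEq F]
  [MulAction G F]

lemma std_congr {n α : Type*} [DecidableEq n] [Zero α] {i j i' j' : n} {c c' : α}
    (hi : i = i') (hj : j = j') (hc : c = c') :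
    Matrix.single i j c = Matrix.single i' j' c' := by
  subst hi; subst hj; subst hc; rfl

lemma TT_mul (p q : F × G) :
    TT k p * TT k q = if p.1 = p.2 • q.1 then TT k (p.1, p.2 * q.2) else 0 := by
  obtain ⟨p1, p2⟩ := p
  obtain ⟨q1, q2⟩ := q
  by_cases hc : p1 = p2 • q1
  · rw [if_pos hc]
    have hq1 : q1 = p2⁻¹ • p1 := by rw [hc, inv_smul_smul]
    subst hq1
    funext o χ
    show TT k (p1, p2) o χ * TT k (p2⁻¹ • p1, q2) o χ = _
    simp only [TT]
    by_cases h : p1 ∈ o.orbit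
    · rw [dif_pos h, dif_pos (smul_mem_orbit h p2⁻¹), dif_pos h]
      refine (Matrix.single_mul_single_same ..).trans
        (std_congr rfl (Subtype.ext ?_) ?_)
      · show q2⁻¹ • p2⁻¹ • p1 = (p2 * q2)⁻¹ • p1
        rw [mul_inv_rev, mul_smul]
      · rw [← Units.val_mul, ← map_mul]
        exact congrArg (fun u => ((χ u : kˣ) : k)) (Subtype.ext (ww_mul p1 p2 q2))
    · rw [dif_neg h, dif_neg h, zero_mul]
  · rw [if_neg hc]
    funext o χ
    show TT k (p1, p2) o χ * TT k (q1, q2) o χ = 0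
    simp only [TT]
    by_cases h1 : p1 ∈ o.orbit
    · by_cases h2 : q1 ∈ o.orbit
      · rw [dif_pos h1, dif_pos h2]
        refine Matrix.single_mul_single_of_ne (h := ?_) ..
        intro hEq
        apply hc
        have : p2⁻¹ • p1 = q1 := congrArg Subtype.val hEq
        rw [← this, smul_inv_smul]
      · rw [dif_neg h2, mul_zero]
    · rw [dif_neg h1, zero_mul]

lemma TT_one : ∑ f : F, TT k (G := G) (f, (1 : G)) = 1 := by
  funext o χ
  rw [Finset.sum_apply, Finset.sum_apply]
  have hval : ∀ x : ↥(HH G (F := F) o), (x : G) = 1 → ((χ x : kˣ) : k) = 1 := by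
    intro x hx
    rw [show x = 1 from Subtype.ext hx, map_one, Units.val_one]
  ext i i'
  rw [Matrix.sum_apply]
  have hterm : ∀ f : F, (TT k (G := G) (f, (1 : G))) o χ i i'
      = if f = (i : F) ∧ i = i' then 1 else 0 := by
    intro f
    simp only [TT]
    by_cases hf : f ∈ o.orbit
    · rw [dif_pos hf, hval _ (ww_one f)]
      show (if (⟨f, hf⟩ : o.orbit) = i ∧ (⟨(1:G)⁻¹ • f, _⟩ : o.orbit) = i' then (1:k) else 0) = _
      by_cases h1 : f = (i : F)
      · by_cases h2 : i = i'
        · rw [if_pos ⟨Subtype.ext h1, Subtype.ext (by simp [h1, h2])⟩, if_pos ⟨h1, h2⟩]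
        · rw [if_neg, if_neg (fun hh => h2 hh.2)]
          rintro ⟨hh1, hh2⟩
          exact h2 (by rw [← hh2, ← hh1]; exact Subtype.ext (by simp))
      · rw [if_neg, if_neg (fun hh => h1 hh.1)]
        rintro ⟨hh1, _⟩
        exact h1 (congrArg Subtype.val hh1)
    · rw [dif_neg hf]
      rw [if_neg, Matrix.zero_apply]
      rintro ⟨hh1, _⟩
      exact hf (hh1 ▸ i.2)
  rw [Finset.sum_congr rfl (fun f _ => hterm f), Pi.one_apply, Pi.one_apply]
  by_cases h2 : i = i'
  · subst h2
    rw [Matrix.one_apply_eq]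
    rw [Finset.sum_congr rfl (fun f _ =>
      if_congr (show (f = (i:F) ∧ i = i) ↔ (f = (i:F)) by simp) rfl rfl)]
    rw [Finset.sum_ite_eq' Finset.univ (i : F) (fun _ => (1:k))]
    simp
  · rw [Matrix.one_apply_ne h2]
    apply Finset.sum_eq_zero
    intro f _
    rw [if_neg (fun hh => h2 hh.2)]

lemma ncard_orbit_eq_index (o : MulAction.orbitRel.Quotient G F) :
    Nat.card o.orbit = (HH G (F := F) o).index := by
  rw [Nat.card_congr ((Equiv.setCongr (orbit_eq o)).trans
    (MulAction.orbitEquivQuotientStabilizer G (rep G o)))]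
  rfl

lemma ncard_orbit_dvd (o : MulAction.orbitRel.Quotient G F) :
    Nat.card o.orbit ∣ Fintype.card G := by
  rw [ncard_orbit_eq_index, ← Nat.card_eq_fintype_card]
  exact Subgroup.index_dvd_card _

lemma ncard_orbit_pos (o : MulAction.orbitRel.Quotient G F) : 0 < Nat.card o.orbit := by
  have : (o.orbit).Nonempty := ⟨rep G o, by rw [orbit_eq]; exact MulAction.mem_orbit_self _⟩
  have : Nonempty o.orbit := this.to_subtype
  exact Nat.card_pos

lemma card_HH_mul (o : MulAction.orbitRel.Quotient G F) :
    Nat.card (HH G (F := F) o) * Nat.card o.orbit = Fintype.card G := by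
  rw [ncard_orbit_eq_index, ← Nat.card_eq_fintype_card]
  exact Subgroup.card_mul_index _

lemma card_HH (o : MulAction.orbitRel.Quotient G F) :
    Nat.card (HH G (F := F) o) = Fintype.card G / Nat.card o.orbit := by
  rw [← card_HH_mul o, Nat.mul_div_cancel _ (ncard_orbit_pos o)]

lemma hasEnough {lam : k} (hlam : IsPrimitiveRoot lam (Fintype.card G))
    (o : MulAction.orbitRel.Quotient G F) :
    HasEnoughRootsOfUnity k (Monoid.exponent (HH G (F := F) o)) := by
  haveI : Fintype ↥(HH G (F := F) o) := Fintype.ofFinite _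
  have hdvd : Monoid.exponent (HH G (F := F) o) ∣ Fintype.card G := by
    refine (Group.exponent_dvd_card).trans ?_
    rw [← Nat.card_eq_fintype_card, ← Nat.card_eq_fintype_card]
    exact Subgroup.card_subgroup_dvd_card _
  have hpos : 0 < Monoid.exponent (HH G (F := F) o) :=
    Monoid.ExponentExists.exponent_pos (Monoid.ExponentExists.of_finite)
  haveI : NeZero (Monoid.exponent (HH G (F := F) o)) := ⟨hpos.ne'⟩
  constructor
  · exact ⟨lam ^ (Fintype.card G / Monoid.exponent (HH G (F := F) o)),
      hlam.pow Fintype.card_pos (Nat.div_mul_cancel hdvd).symm⟩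
  · exact rootsOfUnity.isCyclic k _

lemma TT_indep
    (e : ∀ o : MulAction.orbitRel.Quotient G F, ((↥(HH G (F := F) o) →* kˣ) ≃ ↥(HH G o)))
    (c : F × G → k) (hc : ∑ p : F × G, c p • TT k p = 0) : c = 0 := by
  funext p
  obtain ⟨f, g⟩ := p
  set o : MulAction.orbitRel.Quotient G F := mk G f with ho
  set f' : F := g⁻¹ • f with hf'def
  have hf : f ∈ o.orbit := mem_orbit_iff_mk.mpr rfl
  have hf'o : f' ∈ o.orbit := smul_mem_orbit hf g⁻¹
  set i : o.orbit := ⟨f, hf⟩ with hi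
  set i' : o.orbit := ⟨f', hf'o⟩ with hi'
  -- auxiliary facts about the section
  have hsig : sig G f • rep G o = f := sig_spec f
  have hsig' : sig G f' • rep G o = f' := by
    have := sig_spec (G := G) f'
    rwa [show mk G f' = o from mk_smul g⁻¹ f] at this
  have hstab : ∀ x : ↥(HH G (F := F) o), (x : G) • rep G o = rep G o :=
    fun x => MulAction.mem_stabilizer_iff.mp x.2
  -- the coefficient function on the stabilizer
  set cc : ↥(HH G (F := F) o) → k := fun h => c (f, sig G f * (h : G) * (sig G f')⁻¹) with hcc
  have hmemw : ∀ g₁ : G, ww G f g₁ ∈ HH G (F := F) o := fun g₁ => ww_mem f g₁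
  haveI : Fintype ↥(HH G (F := F) o) := Fintype.ofFinite _
  -- evaluate the relation at (o, χ, i, i')
  have key : ∀ χ : ↥(HH G (F := F) o) →* kˣ, ∑ h, cc h * ((χ h : kˣ) : k) = 0 := by
    intro χ
    have h0 := congrFun (congrFun hc o) χ
    have h1 : ∑ p : F × G, c p * (TT k p o χ i i') = 0 := by
      have := congrFun (congrFun h0 i) i'
      simpa [Finset.sum_apply, Matrix.sum_apply, Pi.smul_apply, Matrix.smul_apply,
        smul_eq_mul] using this
    -- kill terms with first coordinate ≠ f
    rw [Fintype.sum_prod_type] at h1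
    rw [Finset.sum_eq_single f (fun f₁ _ hf₁ => ?_) (by simp)] at h1
    swap
    · apply Finset.sum_eq_zero
      intro g₁ _
      have : TT k (f₁, g₁) o χ i i' = 0 := by
        simp only [TT]
        by_cases hm : f₁ ∈ o.orbit
        · rw [dif_pos hm]
          show (if (⟨f₁, hm⟩ : o.orbit) = i ∧ _ then _ else 0) = 0
          rw [if_neg]
          rintro ⟨hh1, -⟩
          exact hf₁ (congrArg Subtype.val hh1)
        · rw [dif_neg hm, Matrix.zero_apply]
      rw [this, mul_zero]
    -- now a sum over g₁ : G
    have h2 : ∀ g₁ : G, c (f, g₁) * (TT k (f, g₁) o χ i i')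
        = if g₁⁻¹ • f = f' then cc ⟨ww G f g₁, hmemw g₁⟩ * ((χ ⟨ww G f g₁, hmemw g₁⟩ : kˣ) : k)
          else 0 := by
      intro g₁
      simp only [TT, dif_pos hf]
      show c (f, g₁) * (if (⟨f, hf⟩ : o.orbit) = i ∧ (⟨g₁⁻¹ • f, _⟩ : o.orbit) = i' then _ else 0)
        = _
      by_cases hg₁ : g₁⁻¹ • f = f'
      · rw [if_pos ⟨rfl, Subtype.ext hg₁⟩, if_pos hg₁]
        congr 1
        rw [hcc]
        show c (f, g₁) = c (f, sig G f * ww G f g₁ * (sig G f')⁻¹)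
        rw [← hg₁, sig_mul_ww]
      · rw [if_neg, if_neg hg₁, mul_zero]
        rintro ⟨-, hh2⟩
        exact hg₁ (congrArg Subtype.val hh2)
    rw [Finset.sum_congr rfl (fun g₁ _ => h2 g₁)] at h1
    rw [← Finset.sum_filter] at h1
    rw [← h1]
    have hfix : ∀ h : ↥(HH G (F := F) o), (sig G f * (h : G) * (sig G f')⁻¹)⁻¹ • f = f' := by
      intro h
      rw [mul_inv_rev, mul_inv_rev, inv_inv, mul_smul, mul_smul]
      rw [show (sig G f)⁻¹ • f = rep G o from inv_smul_eq_iff.mpr hsig.symm]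
      rw [show ((h : G))⁻¹ • rep G o = rep G o from inv_smul_eq_iff.mpr (hstab h).symm]
      exact hsig'
    refine (Finset.sum_bij' (fun g₁ (_ : g₁ ∈ Finset.univ.filter fun g₁ => g₁⁻¹ • f = f')
        => (⟨ww G f g₁, hmemw g₁⟩ : ↥(HH G (F := F) o)))
      (fun h _ => sig G f * (h : G) * (sig G f')⁻¹) ?_ ?_ ?_ ?_ ?_).symm
    · intro g₁ _
      exact Finset.mem_univ _
    · intro h _
      rw [Finset.mem_filter]
      exact ⟨Finset.mem_univ _, hfix h⟩
    · intro g₁ hg₁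
      rw [Finset.mem_filter] at hg₁
      show sig G f * ww G f g₁ * (sig G f')⁻¹ = g₁
      rw [← hg₁.2, sig_mul_ww]
    · intro h _
      apply Subtype.ext
      show ww G f (sig G f * (h : G) * (sig G f')⁻¹) = (h : G)
      rw [ww_eq, hfix h]
      group
    · intro g₁ _
      rfl
  have := charSum_eq_zero (e o) cc key
  have hval : c (f, g) = cc ⟨ww G f g, hmemw g⟩ := by
    rw [hcc]
    show c (f, g) = c (f, sig G f * ww G f g * (sig G f')⁻¹)
    rw [sig_mul_ww]
  rw [hval, this]
  rfl

noncomputable def arrowCongrLeft {R M X Y : Type*} [CommSemiring R] [Semiring M] [Algebra R M]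
    (e : X ≃ Y) : (X → M) ≃ₐ[R] (Y → M) :=
  { Equiv.arrowCongr e (Equiv.refl M) with
    map_mul' := fun _ _ => rfl
    map_add' := fun _ _ => rfl
    commutes' := fun _ => rfl }

end Smash12

open Smash12 in
/-- Let `G` be a finite abelian group of order `n` acting on the set `F`
(hence on the algebra `B = F → k`, a finite product of copies of `k`, by algebra
automorphisms permuting the primitive orthogonal idempotents `F`), where `k` contains a
primitive `n`-th root of unity.  Let `A` be the smash product `B # k[G]` (presented as an
algebra `A` with structure maps `ιB`, `ιG` satisfying the smash product relations, free with
basis `{(δ_f # g)}`).  Then every `G`-orbit length in `F` divides `|G|` and `A` is a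
semisimple algebra isomorphic to `⊕_{ℓ=1}^t (|G|/n_ℓ) · M_{n_ℓ}(k)`, the `n_ℓ` being the
orbit lengths. -/
theorem stmt12 (k G F A : Type) [Field k] [CommGroup G] [Fintype G] [Fintype F] [DecidableEq F]
    [MulAction G F]
    (lam : k) (hlam : IsPrimitiveRoot lam (Fintype.card G))
    [Ring A] [Algebra k A]
    (ιB : (F → k) →ₐ[k] A) (ιG : G →* A)
    (hcomm : ∀ (g : G) (b : F → k), ιG g * ιB b = ιB (fun f => b (g⁻¹ • f)) * ιG g)
    (bA : Module.Basis (F × G) k A)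
    (hbA : ∀ p : F × G, bA p = ιB (Pi.single p.1 1) * ιG p.2) :
    (∀ o : MulAction.orbitRel.Quotient G F, Nat.card o.orbit ∣ Fintype.card G) ∧
    IsSemisimpleRing A ∧
    Nonempty (A ≃ₐ[k] ((o : MulAction.orbitRel.Quotient G F) →
      (Fin (Fintype.card G / Nat.card o.orbit) →
        Matrix (Fin (Nat.card o.orbit)) (Fin (Nat.card o.orbit)) k))) := by
  classical
  -- multiplication rule in A
  have hBsingle : ∀ (gg : G) (f1 : F),
      ιG gg * ιB (Pi.single f1 1) = ιB (Pi.single (gg • f1) 1) * ιG gg := by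
    intro gg f1
    rw [hcomm]
    congr 2
    funext j
    rw [Pi.single_apply, Pi.single_apply]
    congr 1
    simp only [eq_iff_iff]
    constructor
    · intro h; rw [← h, smul_inv_smul]
    · intro h; rw [h, inv_smul_smul]
  have hmulA : ∀ p q : F × G,
      bA p * bA q = if p.1 = p.2 • q.1 then bA (p.1, p.2 * q.2) else 0 := by
    intro p q
    rw [hbA p, hbA q]
    rw [mul_assoc, ← mul_assoc (ιG p.2), hBsingle, mul_assoc, ← map_mul ιG, ← mul_assoc,
      ← map_mul ιB]
    have hs : (Pi.single p.1 1 : F → k) * Pi.single (p.2 • q.1) 1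
        = if p.1 = p.2 • q.1 then Pi.single p.1 1 else 0 := by
      funext j
      rw [Pi.mul_apply, Pi.single_apply, Pi.single_apply]
      by_cases hc : p.1 = p.2 • q.1
      · rw [if_pos hc, ← hc, Pi.single_apply]
        by_cases hj : j = p.1 <;> simp [hj]
      · rw [if_neg hc, Pi.zero_apply]
        by_cases hj : j = p.1
        · rw [if_pos hj, if_neg (by rw [hj]; exact fun hh => hc hh), one_mul]
        · rw [if_neg hj, zero_mul]
    rw [hs]
    by_cases hc : p.1 = p.2 • q.1
    · rw [if_pos hc, if_pos hc, hbA]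
    · rw [if_neg hc, if_neg hc, map_zero, zero_mul]
  have honeA : (1 : A) = ∑ f : F, bA (f, 1) := by
    have h1 : (1 : F → k) = ∑ f : F, Pi.single f 1 := by
      funext j
      rw [Finset.sum_apply]
      rw [Finset.sum_congr rfl (fun f _ => Pi.single_apply f (1:k) j)]
      simp
    rw [show (1:A) = ιB 1 * ιG 1 by rw [map_one, map_one, one_mul]]
    rw [h1, map_sum, Finset.sum_mul]
    exact Finset.sum_congr rfl fun f _ => (hbA (f,1)).symm
  -- character equivalences
  have e : ∀ o : MulAction.orbitRel.Quotient G F,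
      ((↥(HH G (F := F) o) →* kˣ) ≃ ↥(HH G o)) := fun o => by
    haveI := Smash12.hasEnough (k := k) (F := F) hlam o
    exact (CommGroup.monoidHom_mulEquiv_of_hasEnoughRootsOfUnity (↥(HH G (F := F) o)) k).some.toEquiv
  -- the algebra map
  set Φ : A →ₗ[k] CC k G F := bA.constr k (fun p => TT k p) with hΦ
  have hΦb : ∀ p, Φ (bA p) = TT k p := fun p => bA.constr_basis k _ p
  have hmul : ∀ x y : A, Φ (x * y) = Φ x * Φ y := by
    rw [LinearMap.map_mul_iff]
    apply bA.ext; intro p; apply bA.ext; intro q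
    simp only [LinearMap.compr₂_apply, LinearMap.mul_apply', LinearMap.compl₂_apply,
      LinearMap.comp_apply]
    rw [hmulA, hΦb, hΦb, TT_mul]
    by_cases hc : p.1 = p.2 • q.1
    · rw [if_pos hc, if_pos hc, hΦb]
    · rw [if_neg hc, if_neg hc, map_zero]
  have hone : Φ 1 = 1 := by
    rw [honeA, map_sum]
    rw [Finset.sum_congr rfl (fun f _ => hΦb (f, 1))]
    exact TT_one
  set Φa : A →ₐ[k] CC k G F := AlgHom.ofLinearMap Φ hone hmul with hΦa
  -- injectivity
  have hinj : Function.Injective Φ := by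
    rw [injective_iff_map_eq_zero]
    intro a ha
    have hsum : ∑ p : F × G, bA.repr a p • TT k p = 0 := by
      have h1 : Φ (∑ p : F × G, bA.repr a p • bA p) = ∑ p : F × G, bA.repr a p • TT k p := by
        rw [map_sum]
        exact Finset.sum_congr rfl fun p _ => by rw [map_smul, hΦb]
      rw [← h1, bA.sum_repr a, ha]
    have := TT_indep e (fun p => bA.repr a p) hsum
    have hz : bA.repr a = 0 := by
      ext p; exact congrFun this p
    rw [← bA.sum_repr a, hz]
    simp
  -- dimensions
  haveI : FiniteDimensional k A := Module.Finite.of_basis bA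
  haveI finQ : Finite (MulAction.orbitRel.Quotient G F) := Quotient.finite _
  haveI fintQ : Fintype (MulAction.orbitRel.Quotient G F) := Fintype.ofFinite _
  haveI finH : ∀ o : MulAction.orbitRel.Quotient G F, Fintype (↥(HH G (F := F) o) →* kˣ) :=
    fun o => Fintype.ofEquiv _ (e o).symm
  have hcomp : ∀ o : MulAction.orbitRel.Quotient G F,
      Module.finrank k ((↥(HH G (F := F) o) →* kˣ) → Matrix o.orbit o.orbit k)
        = Fintype.card G * Nat.card o.orbit := by
    intro o
    rw [Module.finrank_pi_fintype, Finset.sum_const, Finset.card_univ, smul_eq_mul]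
    rw [Module.finrank_matrix, Module.finrank_self, mul_one]
    rw [Fintype.card_congr (e o), ← Nat.card_eq_fintype_card, ← Nat.card_eq_fintype_card]
    rw [← mul_assoc, card_HH_mul o]
  have hsumorb : ∑ o : MulAction.orbitRel.Quotient G F, Nat.card o.orbit = Fintype.card F := by
    rw [Finset.sum_congr rfl
      (fun (o : MulAction.orbitRel.Quotient G F) _ => (Nat.card_eq_fintype_card (α := o.orbit)))]
    rw [← Fintype.card_sigma]
    exact (Fintype.card_congr (MulAction.selfEquivSigmaOrbits' G F)).symm
  have hrank : Module.finrank k A = Module.finrank k (CC k G F) := by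
    rw [Module.finrank_eq_card_basis bA, Fintype.card_prod]
    rw [Module.finrank_pi_fintype]
    rw [Finset.sum_congr rfl (fun o _ => hcomp o), ← Finset.mul_sum, hsumorb, mul_comm]
  haveI : FiniteDimensional k (CC k G F) := by
    unfold Smash12.CC
    infer_instance
  have hsurj : Function.Surjective Φ :=
    (LinearMap.injective_iff_surjective_of_finrank_eq_finrank hrank).mp hinj
  -- the equivalence
  let EA : A ≃ₐ[k] CC k G F := AlgEquiv.ofBijective Φa ⟨hinj, hsurj⟩
  let E2 : CC k G F ≃ₐ[k] ((o : MulAction.orbitRel.Quotient G F) →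
      (Fin (Fintype.card G / Nat.card o.orbit) →
        Matrix (Fin (Nat.card o.orbit)) (Fin (Nat.card o.orbit)) k)) :=
    AlgEquiv.piCongrRight fun o =>
      (AlgEquiv.piCongrRight fun _ =>
        Matrix.reindexAlgEquiv k k (Finite.equivFin o.orbit)).trans
      (arrowCongrLeft ((e o).trans (Finite.equivFinOfCardEq (card_HH o))))
  let Etot := EA.trans E2
  refine ⟨fun o => ncard_orbit_dvd o, ?_, ⟨Etot⟩⟩
  haveI : ∀ o : MulAction.orbitRel.Quotient G F,
      IsSemisimpleRing (Matrix (Fin (Nat.card o.orbit)) (Fin (Nat.card o.orbit)) k) :=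
    fun o => matrix_isSemisimpleRing k _
  exact Etot.symm.toRingEquiv.isSemisimpleRing
end

section
/- Let G be a finite abelian group of order n, k a field containing a primitive n-th root of unity, H = k[G], B a left H-module algebra, and A = B # H. If I is an ideal of A, then I = ⊕_{m∈Ĝ} I_m # e_m, where I_m = {b ∈ B : b # e_m ∈ I}, each I_m is a left ideal and left H-submodule of B, and I_m · (e_{m-r}·B) ⊆ I_r for all r. Conversely, any family {I_m} of subspaces of B satisfying these conditions yields an ideal ⊕_m I_m # e_m of A. -/
/-- Let `G` be a finite abelian group of order `n`, `k` a field containing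
a primitive `n`-th root of unity (with a perfect character pairing `χ` of `G`), `H = k[G]`,
`B` a left `H`-module algebra (via the action `τ` of `G` by algebra automorphisms), and
`A = B # H` the smash product (presented by `ιB`, `ιG` with the smash relations and the
standard freeness).  Let `{e_m}_{m ∈ Ĝ}` be the character idempotents of `k[G]` inside `A`,
and `actE m` the action of `e_m` on `B`.  If `I` is a (two-sided) ideal of `A` then
`I = ⊕_m I_m # e_m` where `I_m = {b : ιB b * e_m ∈ I}`, each `I_m` is a left ideal and left
`H`-submodule of `B`, and `I_m (e_{m r⁻¹}·B) ⊆ I_r` for all `r`.  Conversely any family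
`{J_m}` of subspaces of `B` satisfying these conditions yields an ideal
`⊕_m J_m # e_m` of `A`. -/
theorem stmt13 (k G B A ι : Type) [Field k] [CommGroup G] [Fintype G]
    (χ : G →* G →* kˣ)
    (hχ : ∀ m : G, m ≠ 1 → ∑ g : G, ((χ m g : kˣ) : k) = 0)
    (hχ' : ∀ g : G, g ≠ 1 → ∑ m : G, ((χ m g : kˣ) : k) = 0)
    (hroot : ∃ lam : k, IsPrimitiveRoot lam (Fintype.card G))
    (hcard : (Fintype.card G : k) ≠ 0)
    [Ring B] [Algebra k B] (τ : G →* (B ≃ₐ[k] B))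
    [Ring A] [Algebra k A] (ιB : B →ₐ[k] A) (ιG : G →* A)
    (hcomm : ∀ (g : G) (b : B), ιG g * ιB b = ιB (τ g b) * ιG g)
    (bB : Module.Basis ι k B) (bA : Module.Basis (ι × G) k A)
    (hbA : ∀ p : ι × G, bA p = ιB (bB p.1) * ιG p.2)
    (e : G → A)
    (he : ∀ m : G, e m = (Fintype.card G : k)⁻¹ • ∑ g : G, ((χ m g : kˣ) : k) • ιG g)
    (actE : G → B →ₗ[k] B)
    (hactE : ∀ m : G, actE m =
      (Fintype.card G : k)⁻¹ • ∑ g : G, ((χ m g : kˣ) : k) • (τ g).toLinearMap) :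
    -- part (a): ideals decompose
    (∀ I : Submodule k A, (∀ (a x : A), x ∈ I → a * x ∈ I ∧ x * a ∈ I) →
      ((∀ x ∈ I, (∀ m : G, x * e m ∈ I) ∧ x = ∑ m : G, x * e m) ∧
       (∀ x ∈ I, ∀ m : G, ∃ b : B, ιB b * e m ∈ I ∧ x * e m = ιB b * e m) ∧
       (∀ m : G, ∀ b c : B, ιB b * e m ∈ I → (ιB (c * b) * e m ∈ I ∧
          (∀ g : G, ιB (τ g b) * e m ∈ I) ∧ (∀ r : k, ιB (r • b) * e m ∈ I) ∧
          (∀ b' : B, ιB b' * e m ∈ I → ιB (b + b') * e m ∈ I))) ∧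
       (∀ m r : G, ∀ b : B, ιB b * e m ∈ I →
          ∀ c : B, ιB (b * actE (m * r⁻¹) c) * e r ∈ I))) ∧
    -- part (b): converse
    (∀ J : G → Submodule k B,
      (∀ m : G, ∀ c : B, ∀ b ∈ J m, c * b ∈ J m) →
      (∀ m : G, ∀ g : G, ∀ b ∈ J m, τ g b ∈ J m) →
      (∀ m r : G, ∀ b ∈ J m, ∀ c : B, b * actE (m * r⁻¹) c ∈ J r) →
      (∀ (a x : A),
        x ∈ Submodule.span k {x : A | ∃ m : G, ∃ b ∈ J m, x = ιB b * e m} →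
        a * x ∈ Submodule.span k {x : A | ∃ m : G, ∃ b ∈ J m, x = ιB b * e m} ∧
        x * a ∈ Submodule.span k {x : A | ∃ m : G, ∃ b ∈ J m, x = ιB b * e m})) := by
  classical
  have hc_ne : ∀ m g : G, ((χ m g : kˣ) : k) ≠ 0 := fun m g => Units.ne_zero _
  have hc1 : ∀ g : G, ((χ 1 g : kˣ) : k) = 1 := by intro g; rw [map_one]; rfl
  have hcg1 : ∀ m : G, ((χ m 1 : kˣ) : k) = 1 := by intro m; rw [map_one]; rfl
  have hcmul : ∀ m r g : G,
      ((χ (m * r⁻¹) g : kˣ) : k) = ((χ m g : kˣ) : k) * (((χ r g : kˣ) : k))⁻¹ := by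
    intro m r g
    rw [map_mul, map_inv, MonoidHom.mul_apply, MonoidHom.inv_apply, Units.val_mul,
      Units.val_inv_eq_inv_val]
  -- sum of all idempotents is 1
  have sum_e : ∑ m : G, e m = 1 := by
    have h1 : ∑ m : G, e m
        = (Fintype.card G : k)⁻¹ • ∑ g : G, (∑ m : G, ((χ m g : kˣ) : k)) • ιG g := by
      simp_rw [he]
      rw [← Finset.smul_sum, Finset.sum_comm]
      congr 1
      exact Finset.sum_congr rfl fun g _ => (Finset.sum_smul).symm
    rw [h1, Finset.sum_eq_single 1 (fun g _ hg => by rw [hχ' g hg, zero_smul])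
      (fun h => absurd (Finset.mem_univ 1) h)]
    have h2 : (∑ m : G, ((χ m 1 : kˣ) : k)) = (Fintype.card G : k) := by
      simp [hcg1, Finset.card_univ]
    rw [h2, map_one ιG, smul_smul, inv_mul_cancel₀ hcard, one_smul]
  -- ιG g * e m
  have hgE : ∀ (g m : G), ιG g * e m = (((χ m g : kˣ) : k))⁻¹ • e m := by
    intro g m
    have key : ∀ h : G, ιG g * (((χ m h : kˣ) : k) • ιG h)
        = (((χ m g : kˣ) : k))⁻¹ • (((χ m (g * h) : kˣ) : k) • ιG (g * h)) := by
      intro h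
      rw [mul_smul_comm, ← map_mul ιG g h, map_mul (χ m) g h, Units.val_mul, smul_smul,
        inv_mul_cancel_left₀ (hc_ne m g)]
    have hsum2 : ∑ h : G, ((χ m (g * h) : kˣ) : k) • ιG (g * h)
        = ∑ h : G, ((χ m h : kˣ) : k) • ιG h :=
      Fintype.sum_bijective (fun h => g * h) (Group.mulLeft_bijective g) _ _ (fun h => rfl)
    rw [he m, mul_smul_comm, Finset.mul_sum]
    simp_rw [key]
    rw [← Finset.smul_sum, hsum2, smul_comm, ← he m]
  -- e m * ιB c * e r
  have hEBE : ∀ (m r : G) (c : B), e m * ιB c * e r = ιB (actE (m * r⁻¹) c) * e r := by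
    intro m r c
    have hR : ιB (actE (m * r⁻¹) c) * e r
        = (Fintype.card G : k)⁻¹ •
          ∑ g : G, ((χ (m * r⁻¹) g : kˣ) : k) • (ιB (τ g c) * e r) := by
      rw [hactE]
      simp only [LinearMap.smul_apply, LinearMap.coe_sum, Finset.sum_apply,
        LinearMap.smul_apply, AlgEquiv.toLinearMap_apply, map_smul, map_sum,
        smul_mul_assoc, Finset.sum_mul]
    rw [hR, he m]
    simp only [smul_mul_assoc, Finset.sum_mul]
    congr 1
    refine Finset.sum_congr rfl fun g _ => ?_
    rw [hcomm g c, mul_assoc, hgE g r, mul_smul_comm, smul_smul, ← hcmul]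
  -- (ιB b * e m) * (ιB c * e r)
  have hBEBE : ∀ (b c : B) (m r : G),
      (ιB b * e m) * (ιB c * e r) = ιB (b * actE (m * r⁻¹) c) * e r := by
    intro b c m r
    rw [mul_assoc (ιB b), ← mul_assoc (e m) (ιB c) (e r), hEBE m r c, ← mul_assoc, ← map_mul]
  -- ιG g * (ιB b * e m)
  have hGBE : ∀ (g : G) (b : B) (m : G),
      ιG g * (ιB b * e m) = (((χ m g : kˣ) : k))⁻¹ • (ιB (τ g b) * e m) := by
    intro g b m
    rw [← mul_assoc, hcomm g b, mul_assoc, hgE g m, mul_smul_comm]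
  -- (ιB b * ιG g) * e m
  have hBGE : ∀ (b : B) (g m : G),
      (ιB b * ιG g) * e m = (((χ m g : kˣ) : k))⁻¹ • (ιB b * e m) := by
    intro b g m
    rw [mul_assoc, hgE g m, mul_smul_comm]
  -- span over the basis
  have hspan : ∀ (T : Submodule k A), (∀ p : ι × G, bA p ∈ T) → ∀ x : A, x ∈ T := by
    intro T hT x
    have h1 : (⊤ : Submodule k A) ≤ T := by
      rw [← bA.span_eq]
      exact Submodule.span_le.2 (by rintro _ ⟨p, rfl⟩; exact hT p)
    exact h1 trivial
  constructor
  · -- part (a)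
    intro I hI
    refine ⟨?_, ?_, ?_, ?_⟩
    · intro x hx
      refine ⟨fun m => (hI (e m) x hx).2, ?_⟩
      rw [← Finset.mul_sum, sum_e, mul_one]
    · intro x hx m
      let T : Submodule k A :=
        { carrier := {y : A | ∃ b : B, y * e m = ιB b * e m}
          add_mem' := by
            rintro y z ⟨b, hb⟩ ⟨b', hb'⟩
            exact ⟨b + b', by rw [add_mul, hb, hb', map_add, add_mul]⟩
          zero_mem' := ⟨0, by rw [zero_mul, map_zero, zero_mul]⟩
          smul_mem' := by
            rintro r y ⟨b, hb⟩
            exact ⟨r • b, by rw [smul_mul_assoc, hb, map_smul, smul_mul_assoc]⟩ }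
      have hx' : ∃ b : B, x * e m = ιB b * e m := by
        refine hspan T (fun p => ?_) x
        show ∃ b : B, bA p * e m = ιB b * e m
        rw [hbA]
        exact ⟨(((χ m p.2 : kˣ) : k))⁻¹ • bB p.1, by rw [hBGE, map_smul, smul_mul_assoc]⟩
      obtain ⟨b, hb⟩ := hx'
      exact ⟨b, hb ▸ (hI (e m) x hx).2, hb⟩
    · intro m b c hb
      refine ⟨?_, ?_, ?_, ?_⟩
      · have h1 : ιB (c * b) * e m = ιB c * (ιB b * e m) := by rw [map_mul, mul_assoc]
        rw [h1]; exact (hI (ιB c) _ hb).1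
      · intro g
        have h1 : ιG g * (ιB b * e m) ∈ I := (hI (ιG g) _ hb).1
        rw [hGBE] at h1
        have h2 := I.smul_mem ((χ m g : kˣ) : k) h1
        rwa [smul_smul, mul_inv_cancel₀ (hc_ne m g), one_smul] at h2
      · intro r
        rw [map_smul, smul_mul_assoc]; exact I.smul_mem r hb
      · intro b' hb'
        rw [map_add, add_mul]; exact I.add_mem hb hb'
    · intro m r b hb c
      rw [← hBEBE]
      exact (hI (ιB c * e r) _ hb).2
  · -- part (b)
    intro J hJl hJτ hJmul
    set S : Set A := {x : A | ∃ m : G, ∃ b ∈ J m, x = ιB b * e m} with hSdef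
    have hmem : ∀ (m : G) (b : B), b ∈ J m → ιB b * e m ∈ Submodule.span k S :=
      fun m b hb => Submodule.subset_span ⟨m, b, hb, rfl⟩
    let M : Submodule k A :=
      { carrier := {x : A | (∀ a : A, a * x ∈ Submodule.span k S) ∧
          (∀ a : A, x * a ∈ Submodule.span k S)}
        add_mem' := by
          rintro y z ⟨hy1, hy2⟩ ⟨hz1, hz2⟩
          exact ⟨fun a => by rw [mul_add]; exact Submodule.add_mem _ (hy1 a) (hz1 a),
                 fun a => by rw [add_mul]; exact Submodule.add_mem _ (hy2 a) (hz2 a)⟩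
        zero_mem' := ⟨fun a => by rw [mul_zero]; exact Submodule.zero_mem _,
                      fun a => by rw [zero_mul]; exact Submodule.zero_mem _⟩
        smul_mem' := by
          rintro r y ⟨hy1, hy2⟩
          exact ⟨fun a => by rw [mul_smul_comm]; exact Submodule.smul_mem _ r (hy1 a),
                 fun a => by rw [smul_mul_assoc]; exact Submodule.smul_mem _ r (hy2 a)⟩ }
    have hSM : S ⊆ M := by
      rintro x ⟨m, b, hb, rfl⟩
      constructor
      · intro a
        let N : Submodule k A :=
          { carrier := {a : A | a * (ιB b * e m) ∈ Submodule.span k S}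
            add_mem' := fun {y z} hy hz => by
              show (y + z) * (ιB b * e m) ∈ Submodule.span k S
              rw [add_mul]
              have hy' : y * (ιB b * e m) ∈ Submodule.span k S := hy
              have hz' : z * (ιB b * e m) ∈ Submodule.span k S := hz
              exact Submodule.add_mem _ hy' hz'
            zero_mem' := by
              show (0 : A) * (ιB b * e m) ∈ Submodule.span k S
              rw [zero_mul]; exact Submodule.zero_mem _
            smul_mem' := fun r y hy => by
              show (r • y) * (ιB b * e m) ∈ Submodule.span k S
              rw [smul_mul_assoc]
              have hy' : y * (ιB b * e m) ∈ Submodule.span k S := hy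
              exact Submodule.smul_mem _ r hy' }
        refine hspan N (fun p => ?_) a
        show bA p * (ιB b * e m) ∈ Submodule.span k S
        rw [hbA, mul_assoc, hGBE, mul_smul_comm, ← mul_assoc, ← map_mul]
        exact Submodule.smul_mem _ _ (hmem m _ (hJl m _ _ (hJτ m p.2 b hb)))
      · intro a
        let N' : Submodule k A :=
          { carrier := {a : A | (ιB b * e m) * a ∈ Submodule.span k S}
            add_mem' := fun {y z} hy hz => by
              show (ιB b * e m) * (y + z) ∈ Submodule.span k S
              rw [mul_add]
              have hy' : (ιB b * e m) * y ∈ Submodule.span k S := hy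
              have hz' : (ιB b * e m) * z ∈ Submodule.span k S := hz
              exact Submodule.add_mem _ hy' hz'
            zero_mem' := by
              show (ιB b * e m) * (0 : A) ∈ Submodule.span k S
              rw [mul_zero]; exact Submodule.zero_mem _
            smul_mem' := fun r y hy => by
              show (ιB b * e m) * (r • y) ∈ Submodule.span k S
              rw [mul_smul_comm]
              have hy' : (ιB b * e m) * y ∈ Submodule.span k S := hy
              exact Submodule.smul_mem _ r hy' }
        refine hspan N' (fun p => ?_) a
        show (ιB b * e m) * bA p ∈ Submodule.span k S
        rw [hbA]
        have h1 : (ιB b * e m) * (ιB (bB p.1) * ιG p.2)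
            = ∑ r : G, (((χ r p.2 : kˣ) : k))⁻¹ •
                (ιB (b * actE (m * r⁻¹) (bB p.1)) * e r) := by
          conv_lhs => rw [← mul_one (ιB (bB p.1) * ιG p.2), ← sum_e,
            Finset.mul_sum, Finset.mul_sum]
          refine Finset.sum_congr rfl fun r _ => ?_
          rw [hBGE, mul_smul_comm, hBEBE]
        rw [h1]
        exact Submodule.sum_mem _ fun r _ =>
          Submodule.smul_mem _ _ (hmem r _ (hJmul m r b hb _))
    intro a x hx
    have hxM : x ∈ M := Submodule.span_le.mpr hSM hx
    exact ⟨hxM.1 a, hxM.2 a⟩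
end

section
/- Let G be a finite abelian group of order n with character-idempotents e_m ∈ k[G] (k containing a primitive n-th root of unity), B a left k[G]-module algebra, and A = B # k[G]. If L is a left ideal of B that is also a left k[G]-submodule, then L # e_m is a left ideal of A for every m, and the two-sided ideal of A generated by L # e_m equals (L # e_m)(B # 1). -/
/-- Let `G` be a finite abelian group with character idempotents
`e_m ∈ k[G]` (`k` containing a primitive `|G|`-th root of unity), `B` a left `k[G]`-module
algebra and `A = B # k[G]` the smash product (presented by `ιB`, `ιG`).  If `L` is a left
ideal of `B` that is also a left `k[G]`-submodule, then `L # e_m` is a left ideal of `A` for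
every `m`, and the two-sided ideal of `A` generated by `L # e_m` equals
`(L # e_m)(B # 1)`. -/
theorem stmt14 (k G B A ι : Type) [Field k] [CommGroup G] [Fintype G]
    (χ : G →* G →* kˣ)
    (hχ : ∀ m : G, m ≠ 1 → ∑ g : G, ((χ m g : kˣ) : k) = 0)
    (hχ' : ∀ g : G, g ≠ 1 → ∑ m : G, ((χ m g : kˣ) : k) = 0)
    (hroot : ∃ lam : k, IsPrimitiveRoot lam (Fintype.card G))
    (hcard : (Fintype.card G : k) ≠ 0)
    [Ring B] [Algebra k B] (τ : G →* (B ≃ₐ[k] B))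
    [Ring A] [Algebra k A] (ιB : B →ₐ[k] A) (ιG : G →* A)
    (hcomm : ∀ (g : G) (b : B), ιG g * ιB b = ιB (τ g b) * ιG g)
    (bB : Module.Basis ι k B) (bA : Module.Basis (ι × G) k A)
    (hbA : ∀ p : ι × G, bA p = ιB (bB p.1) * ιG p.2)
    (e : G → A)
    (he : ∀ m : G, e m = (Fintype.card G : k)⁻¹ • ∑ g : G, ((χ m g : kˣ) : k) • ιG g)
    (L : Submodule k B)
    (hLideal : ∀ c : B, ∀ b ∈ L, c * b ∈ L)
    (hLmod : ∀ g : G, ∀ b ∈ L, τ g b ∈ L)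
    (m : G) :
    (∀ a : A, ∀ x ∈ Submodule.span k {x : A | ∃ b ∈ L, x = ιB b * e m},
      a * x ∈ Submodule.span k {x : A | ∃ b ∈ L, x = ιB b * e m}) ∧
    (Submodule.span k {x : A | ∃ b ∈ L, x = ιB b * e m}
        ≤ Submodule.span k {x : A | ∃ b ∈ L, ∃ c : B, x = (ιB b * e m) * ιB c} ∧
      (∀ (a x : A), x ∈ Submodule.span k {x : A | ∃ b ∈ L, ∃ c : B, x = (ιB b * e m) * ιB c} →
        a * x ∈ Submodule.span k {x : A | ∃ b ∈ L, ∃ c : B, x = (ιB b * e m) * ιB c} ∧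
        x * a ∈ Submodule.span k {x : A | ∃ b ∈ L, ∃ c : B, x = (ιB b * e m) * ιB c}) ∧
      (∀ J : Submodule k A, (∀ (a x : A), x ∈ J → a * x ∈ J ∧ x * a ∈ J) →
        Submodule.span k {x : A | ∃ b ∈ L, x = ιB b * e m} ≤ J →
        Submodule.span k {x : A | ∃ b ∈ L, ∃ c : B, x = (ιB b * e m) * ιB c} ≤ J)) := by
  set S : Set A := {x : A | ∃ b ∈ L, x = ιB b * e m} with hS
  set T : Set A := {x : A | ∃ b ∈ L, ∃ c : B, x = (ιB b * e m) * ιB c} with hT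
  -- `e m` eats group elements from the right, producing a scalar
  have hEg : ∀ g : G, e m * ιG g = (((χ m g)⁻¹ : kˣ) : k) • e m := by
    intro g
    have hsum : (∑ i : G, ((χ m i : kˣ) : k) • ιG i) * ιG g
        = (((χ m g)⁻¹ : kˣ) : k) • ∑ i : G, ((χ m i : kˣ) : k) • ιG i := by
      rw [Finset.sum_mul, Finset.smul_sum]
      refine Fintype.sum_equiv (Equiv.mulRight g) _ _ ?_
      intro h
      show (((χ m h : kˣ) : k) • ιG h) * ιG g
          = (((χ m g)⁻¹ : kˣ) : k) • ((((χ m (h * g) : kˣ) : k)) • ιG (h * g))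
      rw [smul_mul_assoc, ← map_mul, smul_smul]
      congr 1
      rw [Units.val_inv_eq_inv_val]
      field_simp
      rw [map_mul, Units.val_mul]
    rw [he, smul_mul_assoc, hsum, smul_comm]
  have hgE : ∀ g : G, ιG g * e m = (((χ m g)⁻¹ : kˣ) : k) • e m := by
    intro g
    rw [← hEg]
    rw [he, smul_mul_assoc, mul_smul_comm, Finset.sum_mul, Finset.mul_sum]
    congr 2
    funext h
    rw [smul_mul_assoc, mul_smul_comm, ← map_mul, ← map_mul, mul_comm g h]
  -- commuting `ιG g` to the left across `ιB`
  have hcomm' : ∀ (g : G) (c : B), ιB c * ιG g = ιG g * ιB (τ g⁻¹ c) := by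
    intro g c
    rw [hcomm]
    congr 2
    have : τ g (τ g⁻¹ c) = (τ g * τ g⁻¹) c := rfl
    rw [this, ← map_mul, mul_inv_cancel, map_one]
    rfl
  -- helper: to multiply a span by arbitrary `a`, suffices to do so for basis vectors
  have hleft : ∀ (N : Submodule k A) (x : A), (∀ p : ι × G, bA p * x ∈ N) →
      ∀ a : A, a * x ∈ N := by
    intro N x h a
    have h2 : (⊤ : Submodule k A) ≤ N.comap (LinearMap.mulRight k x) := by
      rw [← bA.span_eq]
      refine Submodule.span_le.mpr ?_
      rintro _ ⟨p, rfl⟩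
      exact h p
    exact h2 Submodule.mem_top
  have hright : ∀ (N : Submodule k A) (x : A), (∀ p : ι × G, x * bA p ∈ N) →
      ∀ a : A, x * a ∈ N := by
    intro N x h a
    have h2 : (⊤ : Submodule k A) ≤ N.comap (LinearMap.mulLeft k x) := by
      rw [← bA.span_eq]
      refine Submodule.span_le.mpr ?_
      rintro _ ⟨p, rfl⟩
      exact h p
    exact h2 Submodule.mem_top
  -- key computation: ιG g * (ιB b * e m) is a scalar multiple of (ιB (τ g b) * e m)
  have hkey : ∀ (g : G) (b : B), ιG g * (ιB b * e m)
      = (((χ m g)⁻¹ : kˣ) : k) • (ιB (τ g b) * e m) := by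
    intro g b
    rw [← mul_assoc, hcomm, mul_assoc, hgE, mul_smul_comm]
  -- Part 1: span S is a left ideal
  have part1 : ∀ a : A, ∀ x ∈ Submodule.span k S, a * x ∈ Submodule.span k S := by
    intro a x hx
    induction hx using Submodule.span_induction with
    | mem y hy =>
      refine hleft _ y ?_ a
      intro p
      obtain ⟨b, hb, rfl⟩ := hy
      rw [hbA, mul_assoc, hkey, mul_smul_comm, ← mul_assoc, ← map_mul]
      exact Submodule.smul_mem _ _ (Submodule.subset_span
        ⟨bB p.1 * τ p.2 b, hLideal _ _ (hLmod _ _ hb), rfl⟩)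
    | zero => rw [mul_zero]; exact Submodule.zero_mem _
    | add y z _ _ hy hz => rw [mul_add]; exact Submodule.add_mem _ hy hz
    | smul c y _ hy => rw [mul_smul_comm]; exact Submodule.smul_mem _ _ hy
  refine ⟨part1, ?_, ?_, ?_⟩
  · -- span S ≤ span T
    refine Submodule.span_le.mpr ?_
    rintro _ ⟨b, hb, rfl⟩
    refine Submodule.subset_span ⟨b, hb, 1, ?_⟩
    rw [map_one, mul_one]
  · -- span T is a two-sided ideal
    intro a x hx
    constructor
    · induction hx using Submodule.span_induction with
      | mem y hy =>
        refine hleft _ y ?_ a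
        intro p
        obtain ⟨b, hb, c, rfl⟩ := hy
        rw [hbA, mul_assoc, ← mul_assoc (ιG p.2), hkey, smul_mul_assoc, mul_smul_comm,
          ← mul_assoc, ← mul_assoc, ← map_mul]
        exact Submodule.smul_mem _ _ (Submodule.subset_span
          ⟨bB p.1 * τ p.2 b, hLideal _ _ (hLmod _ _ hb), c, rfl⟩)
      | zero => rw [mul_zero]; exact Submodule.zero_mem _
      | add y z _ _ hy hz => rw [mul_add]; exact Submodule.add_mem _ hy hz
      | smul c y _ hy => rw [mul_smul_comm]; exact Submodule.smul_mem _ _ hy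
    · induction hx using Submodule.span_induction with
      | mem y hy =>
        refine hright _ y ?_ a
        intro p
        obtain ⟨b, hb, c, rfl⟩ := hy
        rw [hbA, ← mul_assoc, mul_assoc _ (ιB c) (ιB (bB p.1)), ← map_mul,
          mul_assoc _ (ιB (c * bB p.1)) (ιG p.2), hcomm', ← mul_assoc,
          mul_assoc (ιB b), hEg, mul_smul_comm, smul_mul_assoc]
        exact Submodule.smul_mem _ _ (Submodule.subset_span ⟨b, hb, _, rfl⟩)
      | zero => rw [zero_mul]; exact Submodule.zero_mem _
      | add y z _ _ hy hz => rw [add_mul]; exact Submodule.add_mem _ hy hz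
      | smul c y _ hy => rw [smul_mul_assoc]; exact Submodule.smul_mem _ _ hy
  · -- minimality
    intro J hJ hSJ
    refine Submodule.span_le.mpr ?_
    rintro _ ⟨b, hb, c, rfl⟩
    exact (hJ (ιB c) (ιB b * e m) (hSJ (Submodule.subset_span ⟨b, hb, rfl⟩))).2
end

section
/- With G a finite abelian group acting on a left k[G]-module algebra B (k containing enough roots of unity), suppose B is semisimple as a module algebra, i.e. every left ideal and k[G]-submodule L of B has a complement L' which is also a left ideal and k[G]-submodule. If L is a two-sided ideal and a left k[G]-submodule of B, then the ideal of A = B # k[G] generated by L # e_m equals (L # e_m)(L # 1). -/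
/-- With `G` a finite abelian group acting on a left `k[G]`-module algebra
`B` (`k` containing enough roots of unity), suppose `B` is semisimple as a module algebra,
i.e. every left ideal and `k[G]`-submodule of `B` has a complement of the same kind.  If `L`
is a two-sided ideal and a left `k[G]`-submodule of `B`, then the ideal of the smash product
`A = B # k[G]` generated by `L # e_m` equals `(L # e_m)(L # 1)`. -/
theorem stmt15 (k G B A ι : Type) [Field k] [CommGroup G] [Fintype G]
    (χ : G →* G →* kˣ)
    (hχ : ∀ m : G, m ≠ 1 → ∑ g : G, ((χ m g : kˣ) : k) = 0)
    (hχ' : ∀ g : G, g ≠ 1 → ∑ m : G, ((χ m g : kˣ) : k) = 0)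
    (hroot : ∃ lam : k, IsPrimitiveRoot lam (Fintype.card G))
    (hcard : (Fintype.card G : k) ≠ 0)
    [Ring B] [Algebra k B] (τ : G →* (B ≃ₐ[k] B))
    [Ring A] [Algebra k A] (ιB : B →ₐ[k] A) (ιG : G →* A)
    (hcomm : ∀ (g : G) (b : B), ιG g * ιB b = ιB (τ g b) * ιG g)
    (bB : Module.Basis ι k B) (bA : Module.Basis (ι × G) k A)
    (hbA : ∀ p : ι × G, bA p = ιB (bB p.1) * ιG p.2)
    (e : G → A)
    (he : ∀ m : G, e m = (Fintype.card G : k)⁻¹ • ∑ g : G, ((χ m g : kˣ) : k) • ιG g)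
    -- `B` is semisimple as a module algebra:
    (hss : ∀ L' : Submodule k B, (∀ c : B, ∀ b ∈ L', c * b ∈ L') →
      (∀ g : G, ∀ b ∈ L', τ g b ∈ L') →
      ∃ L'' : Submodule k B, (∀ c : B, ∀ b ∈ L'', c * b ∈ L'') ∧
        (∀ g : G, ∀ b ∈ L'', τ g b ∈ L'') ∧ IsCompl L' L'')
    (L : Submodule k B)
    (hLideal : ∀ c : B, ∀ b ∈ L, c * b ∈ L)
    (hLideal' : ∀ c : B, ∀ b ∈ L, b * c ∈ L)
    (hLmod : ∀ g : G, ∀ b ∈ L, τ g b ∈ L)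
    (m : G) :
    -- `(L # e_m)(L # 1)` is the two-sided ideal of `A` generated by `L # e_m`:
    Submodule.span k {x : A | ∃ b ∈ L, x = ιB b * e m}
        ≤ Submodule.span k {x : A | ∃ b ∈ L, ∃ c ∈ L, x = (ιB b * e m) * ιB c} ∧
    (∀ (a x : A), x ∈ Submodule.span k {x : A | ∃ b ∈ L, ∃ c ∈ L, x = (ιB b * e m) * ιB c} →
      a * x ∈ Submodule.span k {x : A | ∃ b ∈ L, ∃ c ∈ L, x = (ιB b * e m) * ιB c} ∧
      x * a ∈ Submodule.span k {x : A | ∃ b ∈ L, ∃ c ∈ L, x = (ιB b * e m) * ιB c}) ∧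
    (∀ J : Submodule k A, (∀ (a x : A), x ∈ J → a * x ∈ J ∧ x * a ∈ J) →
      Submodule.span k {x : A | ∃ b ∈ L, x = ιB b * e m} ≤ J →
      Submodule.span k {x : A | ∃ b ∈ L, ∃ c ∈ L, x = (ιB b * e m) * ιB c} ≤ J) := by
  classical
  set S := Submodule.span k {x : A | ∃ b ∈ L, ∃ c ∈ L, x = (ιB b * e m) * ιB c} with hS
  -- basic facts about τ
  have hτmul : ∀ (g h : G) (b : B), τ g (τ h b) = τ (g * h) b := by
    intro g h b; rw [map_mul, AlgEquiv.mul_apply]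
  -- commutation the other way
  have hcomm' : ∀ (g : G) (b : B), ιB b * ιG g = ιG g * ιB (τ g⁻¹ b) := by
    intro g b
    rw [hcomm, hτmul, mul_inv_cancel, MonoidHom.map_one, AlgEquiv.one_apply]
  -- e m absorbs group elements with a character scalar, on both sides
  have heG : ∀ g : G, e m * ιG g = (((χ m g)⁻¹ : kˣ) : k) • e m := by
    intro g
    rw [he, smul_mul_assoc, Finset.sum_mul]
    have h1 : ∀ h : G, (((χ m h : kˣ) : k) • ιG h) * ιG g
        = ((χ m h : kˣ) : k) • ιG (h * g) := by
      intro h; rw [smul_mul_assoc, map_mul]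
    simp only [h1]
    have h2 : ∑ h : G, ((χ m h : kˣ) : k) • ιG (h * g)
        = ∑ h : G, ((χ m (h * g⁻¹) : kˣ) : k) • ιG h := by
      refine Fintype.sum_equiv (Equiv.mulRight g) _ _ fun h => ?_
      simp [mul_inv_cancel_right]
    rw [h2]
    have h3 : ∀ h : G, ((χ m (h * g⁻¹) : kˣ) : k)
        = (((χ m g)⁻¹ : kˣ) : k) * ((χ m h : kˣ) : k) := by
      intro h
      rw [map_mul, map_inv]
      push_cast
      ring
    simp only [h3, mul_smul]
    rw [← Finset.smul_sum, smul_comm]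
  have hGe : ∀ g : G, ιG g * e m = (((χ m g)⁻¹ : kˣ) : k) • e m := by
    intro g
    rw [he, mul_smul_comm, Finset.mul_sum]
    have h1 : ∀ h : G, ιG g * (((χ m h : kˣ) : k) • ιG h)
        = ((χ m h : kˣ) : k) • ιG (g * h) := by
      intro h; rw [mul_smul_comm, map_mul]
    simp only [h1]
    have h2 : ∑ h : G, ((χ m h : kˣ) : k) • ιG (g * h)
        = ∑ h : G, ((χ m (g⁻¹ * h) : kˣ) : k) • ιG h := by
      refine Fintype.sum_equiv (Equiv.mulLeft g) _ _ fun h => ?_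
      simp [inv_mul_cancel_left]
    rw [h2]
    have h3 : ∀ h : G, ((χ m (g⁻¹ * h) : kˣ) : k)
        = (((χ m g)⁻¹ : kˣ) : k) * ((χ m h : kˣ) : k) := by
      intro h
      rw [map_mul, map_inv]
      push_cast
      ring
    simp only [h3, mul_smul]
    rw [← Finset.smul_sum, smul_comm]
  -- e m commutes with invariant elements
  have hBe : ∀ c : B, (∀ g : G, τ g c = c) → e m * ιB c = ιB c * e m := by
    intro c hc
    rw [he, smul_mul_assoc, mul_smul_comm, Finset.sum_mul, Finset.mul_sum]
    congr 1
    refine Finset.sum_congr rfl fun g _ => ?_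
    rw [smul_mul_assoc, mul_smul_comm, hcomm, hc]
  -- the invariant relative unit x₁ of L
  obtain ⟨L'', hL''mul, hL''τ, hcompl⟩ := hss L hLideal hLmod
  have h1mem : (1 : B) ∈ L ⊔ L'' := by
    rw [hcompl.sup_eq_top]; trivial
  obtain ⟨x, hx, y, hy, hxy⟩ := Submodule.mem_sup.mp h1mem
  set N : k := ((Fintype.card G : k))⁻¹ with hN
  set x₁ : B := N • ∑ g : G, τ g x with hx₁def
  set y₁ : B := N • ∑ g : G, τ g y with hy₁def
  have hx₁L : x₁ ∈ L :=
    Submodule.smul_mem _ _ (Submodule.sum_mem _ fun g _ => hLmod g x hx)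
  have hy₁L : y₁ ∈ L'' :=
    Submodule.smul_mem _ _ (Submodule.sum_mem _ fun g _ => hL''τ g y hy)
  have hx₁inv : ∀ g : G, τ g x₁ = x₁ := by
    intro g
    rw [hx₁def, map_smul, map_sum]
    congr 1
    refine Fintype.sum_equiv (Equiv.mulLeft g) _ _ fun h => ?_
    simp only [Equiv.coe_mulLeft, hτmul]
  have hsum1 : x₁ + y₁ = 1 := by
    rw [hx₁def, hy₁def, ← smul_add, ← Finset.sum_add_distrib]
    have h1 : ∀ g : G, τ g x + τ g y = 1 := fun g => by
      rw [← map_add, hxy, map_one]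
    simp only [h1, Finset.sum_const, Finset.card_univ, ← Nat.cast_smul_eq_nsmul k]
    rw [smul_smul, hN, inv_mul_cancel₀ hcard, one_smul]
  have hbx : ∀ b ∈ L, b * x₁ = b := by
    intro b hb
    have h0 : b * y₁ = 0 := by
      refine Submodule.disjoint_def.mp hcompl.disjoint _ (hLideal' y₁ b hb)
        (hL''mul b y₁ hy₁L)
    have : b * (x₁ + y₁) = b := by rw [hsum1, mul_one]
    rw [mul_add, h0, add_zero] at this
    exact this
  -- part 1
  have part1 : Submodule.span k {x : A | ∃ b ∈ L, x = ιB b * e m} ≤ S := by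
    refine Submodule.span_le.mpr ?_
    rintro _ ⟨b, hb, rfl⟩
    refine Submodule.subset_span ⟨b, hb, x₁, hx₁L, ?_⟩
    rw [mul_assoc, hBe x₁ hx₁inv, ← mul_assoc, ← map_mul, hbx b hb]
  -- closure of S under multiplication by monomials
  have hmonL : ∀ (d : B) (g : G), ∀ x ∈ S, (ιB d * ιG g) * x ∈ S := by
    intro d g x hx
    refine Submodule.span_induction ?_ ?_ ?_ ?_ hx
    · rintro _ ⟨b, hb, c, hc, rfl⟩
      have key : (ιB d * ιG g) * ((ιB b * e m) * ιB c)
          = (((χ m g)⁻¹ : kˣ) : k) • ((ιB (d * τ g b) * e m) * ιB c) := by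
        calc (ιB d * ιG g) * ((ιB b * e m) * ιB c)
            = ιB d * ((ιG g * ιB b) * (e m * ιB c)) := by simp only [mul_assoc]
          _ = ιB d * ((ιB (τ g b) * ιG g) * (e m * ιB c)) := by rw [hcomm]
          _ = (ιB d * ιB (τ g b)) * ((ιG g * e m) * ιB c) := by simp only [mul_assoc]
          _ = (ιB d * ιB (τ g b)) * (((((χ m g)⁻¹ : kˣ) : k) • e m) * ιB c) := by
              rw [hGe]
          _ = (((χ m g)⁻¹ : kˣ) : k) • ((ιB (d * τ g b) * e m) * ιB c) := by
              rw [map_mul]; simp only [smul_mul_assoc, mul_smul_comm, mul_assoc]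
      rw [key]
      exact Submodule.smul_mem _ _ (Submodule.subset_span
        ⟨d * τ g b, hLideal d _ (hLmod g b hb), c, hc, rfl⟩)
    · simp
    · intro u v _ _ hu hv
      rw [mul_add]; exact Submodule.add_mem _ hu hv
    · intro a u _ hu
      rw [mul_smul_comm]; exact Submodule.smul_mem _ _ hu
  have hmonR : ∀ (d : B) (g : G), ∀ x ∈ S, x * (ιB d * ιG g) ∈ S := by
    intro d g x hx
    refine Submodule.span_induction ?_ ?_ ?_ ?_ hx
    · rintro _ ⟨b, hb, c, hc, rfl⟩
      have key : ((ιB b * e m) * ιB c) * (ιB d * ιG g)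
          = (((χ m g)⁻¹ : kˣ) : k) • ((ιB b * e m) * ιB (τ g⁻¹ (c * d))) := by
        calc ((ιB b * e m) * ιB c) * (ιB d * ιG g)
            = ιB b * (e m * ((ιB c * ιB d) * ιG g)) := by simp only [mul_assoc]
          _ = ιB b * (e m * (ιB (c * d) * ιG g)) := by rw [map_mul]
          _ = ιB b * (e m * (ιG g * ιB (τ g⁻¹ (c * d)))) := by rw [hcomm']
          _ = ιB b * ((e m * ιG g) * ιB (τ g⁻¹ (c * d))) := by simp only [mul_assoc]
          _ = ιB b * (((((χ m g)⁻¹ : kˣ) : k) • e m) * ιB (τ g⁻¹ (c * d))) := by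
              rw [heG]
          _ = (((χ m g)⁻¹ : kˣ) : k) • ((ιB b * e m) * ιB (τ g⁻¹ (c * d))) := by
              simp only [smul_mul_assoc, mul_smul_comm, mul_assoc]
      rw [key]
      exact Submodule.smul_mem _ _ (Submodule.subset_span
        ⟨b, hb, τ g⁻¹ (c * d), hLmod g⁻¹ _ (hLideal' d c hc), rfl⟩)
    · simp
    · intro u v _ _ hu hv
      rw [add_mul]; exact Submodule.add_mem _ hu hv
    · intro a u _ hu
      rw [smul_mul_assoc]; exact Submodule.smul_mem _ _ hu
  have part2 : ∀ (a x : A), x ∈ S → a * x ∈ S ∧ x * a ∈ S := by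
    intro a x hx
    have ha : a ∈ Submodule.span k (Set.range bA) := by
      rw [bA.span_eq]; trivial
    constructor
    · refine Submodule.span_induction ?_ ?_ ?_ ?_ ha
      · rintro _ ⟨p, rfl⟩
        rw [hbA]
        exact hmonL _ _ x hx
      · simp
      · intro u v _ _ hu hv; rw [add_mul]; exact Submodule.add_mem _ hu hv
      · intro a u _ hu; rw [smul_mul_assoc]; exact Submodule.smul_mem _ _ hu
    · refine Submodule.span_induction ?_ ?_ ?_ ?_ ha
      · rintro _ ⟨p, rfl⟩
        rw [hbA]
        exact hmonR _ _ x hx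
      · simp
      · intro u v _ _ hu hv; rw [mul_add]; exact Submodule.add_mem _ hu hv
      · intro a u _ hu; rw [mul_smul_comm]; exact Submodule.smul_mem _ _ hu
  refine ⟨part1, part2, ?_⟩
  intro J hJ hJmono
  refine Submodule.span_le.mpr ?_
  rintro _ ⟨b, hb, c, hc, rfl⟩
  have h1 : ιB b * e m ∈ J :=
    hJmono (Submodule.subset_span ⟨b, hb, rfl⟩)
  exact (hJ (ιB c) _ h1).2
end

section
/- Let G be a finite abelian group of order n acting on a product of copies of k with primitive idempotent basis F, k containing a primitive n-th root of unity λ. Fix f ∈ F with G-orbit of size r, and fix m. Define, for u,v in a transversal S of the stabilizer, E_{uv} = r(g^{(u)}·f # e_m)(g^{(v)}·f # 1) in B # k[G]. Then E_{uv}E_{rs} = δ_{v,r}E_{us}, the E_{uv} are linearly independent, and their span M_{f,m} is a minimal two-sided ideal of B # k[G] isomorphic to M_r(k). -/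
set_option maxHeartbeats 1000000


/-- Let `G` be a finite abelian group of order `n` acting on the set `F`
(hence on `B = F → k`, a product of copies of `k` with primitive idempotent basis `F`), `k`
containing a primitive `n`-th root of unity, with character pairing `χ`; let `A = B # k[G]`
be the smash product (presented by `ιB`, `ιG`) and `e_m ∈ A` the character idempotents of
`k[G]`.  Fix `f ∈ F` with `G`-orbit of size `r`, enumerated without repetition by a
transversal `s : Fin r → G`, and fix `m ∈ G`.  Define
`E u v = r • (ιB(δ_{s u • f}) * e_m) * ιB(δ_{s v • f})`.  Then `E u v * E p q = δ_{v p} E u q`,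
the `E u v` are linearly independent, and their span `M_{f,m}` is a minimal two-sided ideal
of `A` isomorphic (as a multiplicative `k`-linear object) to the matrix algebra `M_r(k)`. -/
theorem stmt16 (k G F A : Type) [Field k] [CommGroup G] [Fintype G]
    [Fintype F] [DecidableEq F] [MulAction G F]
    (χ : G →* G →* kˣ)
    (hχ : ∀ m : G, m ≠ 1 → ∑ g : G, ((χ m g : kˣ) : k) = 0)
    (hχ' : ∀ g : G, g ≠ 1 → ∑ m : G, ((χ m g : kˣ) : k) = 0)
    (lam : k) (hlam : IsPrimitiveRoot lam (Fintype.card G))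
    (hcard : (Fintype.card G : k) ≠ 0)
    [Ring A] [Algebra k A] (ιB : (F → k) →ₐ[k] A) (ιG : G →* A)
    (hcomm : ∀ (g : G) (b : F → k), ιG g * ιB b = ιB (fun x => b (g⁻¹ • x)) * ιG g)
    (bA : Module.Basis (F × G) k A)
    (hbA : ∀ p : F × G, bA p = ιB (Pi.single p.1 1) * ιG p.2)
    (e : G → A)
    (he : ∀ m : G, e m = (Fintype.card G : k)⁻¹ • ∑ g : G, ((χ m g : kˣ) : k) • ιG g)
    (f : F) (r : ℕ) (hr : r = Nat.card (MulAction.orbit G f))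
    (s : Fin r → G)
    (hsinj : Function.Injective fun u : Fin r => s u • f)
    (hsorb : ∀ x ∈ MulAction.orbit G f, ∃ u : Fin r, s u • f = x)
    (m : G)
    (E : Fin r → Fin r → A)
    (hE : ∀ u v : Fin r, E u v =
      (r : k) • ((ιB (Pi.single (s u • f) 1) * e m) * ιB (Pi.single (s v • f) 1))) :
    (∀ u v p q : Fin r, E u v * E p q = if v = p then E u q else 0) ∧
    LinearIndependent k (fun uv : Fin r × Fin r => E uv.1 uv.2) ∧
    (∀ (a x : A), x ∈ Submodule.span k {x : A | ∃ u v : Fin r, x = E u v} →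
      a * x ∈ Submodule.span k {x : A | ∃ u v : Fin r, x = E u v} ∧
      x * a ∈ Submodule.span k {x : A | ∃ u v : Fin r, x = E u v}) ∧
    Submodule.span k {x : A | ∃ u v : Fin r, x = E u v} ≠ ⊥ ∧
    (∀ J : Submodule k A, (∀ (a x : A), x ∈ J → a * x ∈ J ∧ x * a ∈ J) →
      J ≤ Submodule.span k {x : A | ∃ u v : Fin r, x = E u v} →
      J = ⊥ ∨ J = Submodule.span k {x : A | ∃ u v : Fin r, x = E u v}) ∧
    (∃ φ : Matrix (Fin r) (Fin r) k →ₗ[k] A, Function.Injective φ ∧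
      LinearMap.range φ = Submodule.span k {x : A | ∃ u v : Fin r, x = E u v} ∧
      ∀ X Y : Matrix (Fin r) (Fin r) k, φ (X * Y) = φ X * φ Y) := by
  classical
  set n := Fintype.card G with hn
  set D : F → A := fun x => ιB (Pi.single x 1) with hDdef
  have hD : ∀ x y : F, D x * D y = if x = y then D x else 0 := by
    intro x y
    have key : (Pi.single x 1 : F → k) * Pi.single y 1 = if x = y then Pi.single x 1 else 0 := by
      ext z
      rw [Pi.mul_apply]
      rcases eq_or_ne x y with h | h
      · subst h
        rw [if_pos rfl]
        simp only [Pi.single_apply]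
        split_ifs <;> simp
      · rw [if_neg h]
        simp only [Pi.single_apply, Pi.zero_apply]
        split_ifs with h1 h2 <;> simp_all
    simp only [hDdef]
    rw [← map_mul, key]
    split_ifs <;> simp
  have hgD : ∀ (g : G) (x : F), ιG g * D x = D (g • x) * ιG g := by
    intro g x
    rw [hcomm]
    congr 2
    funext z
    simp [Pi.single_apply, inv_smul_eq_iff]
  have heg : ∀ g : G, e m * ιG g = (((χ m g)⁻¹ : kˣ) : k) • e m := by
    intro g
    have hsum : ∑ x : G, ((χ m x : kˣ) : k) • ιG x * ιG g
        = (((χ m g)⁻¹ : kˣ) : k) • ∑ t : G, ((χ m t : kˣ) : k) • ιG t := by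
      rw [Finset.smul_sum]
      refine Fintype.sum_equiv (Equiv.mulRight g) _ _ fun t => ?_
      simp only [Equiv.coe_mulRight]
      have hsc : (((χ m g)⁻¹ : kˣ) : k) * ((χ m (t * g) : kˣ) : k) = ((χ m t : kˣ) : k) := by
        norm_cast
        rw [map_mul, mul_comm ((χ m) t), ← mul_assoc, inv_mul_cancel, one_mul]
      rw [smul_mul_assoc, ← map_mul, smul_smul, hsc]
    rw [he, smul_mul_assoc, Finset.sum_mul, hsum, smul_comm]
  have hge : ∀ g : G, ιG g * e m = (((χ m g)⁻¹ : kˣ) : k) • e m := by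
    intro g
    rw [← heg g, he, smul_mul_assoc, mul_smul_comm, Finset.mul_sum, Finset.sum_mul]
    congr 1
    refine Finset.sum_congr rfl fun t _ => ?_
    rw [mul_smul_comm, smul_mul_assoc, ← map_mul, ← map_mul, mul_comm]
  set T : F → F → Finset G := fun a b => Finset.univ.filter fun g => g • b = a with hTdef
  have hTmem : ∀ (a b : F) (g : G), g ∈ T a b ↔ g • b = a := by
    intro a b g
    simp [hTdef]
  have horb : ∀ u : Fin r, s u • f ∈ MulAction.orbit G f := fun u => ⟨s u, rfl⟩
  have hDeD : ∀ a b : F, D a * e m * D b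
      = (n : k)⁻¹ • ∑ g ∈ T a b, ((χ m g : kˣ) : k) • (D a * ιG g) := by
    intro a b
    rw [he, mul_smul_comm, smul_mul_assoc, Finset.mul_sum, Finset.sum_mul]
    congr 1
    rw [Finset.sum_filter]
    refine Finset.sum_congr rfl fun g _ => ?_
    rw [mul_smul_comm, smul_mul_assoc, mul_assoc, hgD, ← mul_assoc, hD]
    by_cases hgb : g • b = a
    · rw [if_pos hgb, if_pos (hgb.symm)]
    · rw [if_neg hgb, if_neg (fun h => hgb h.symm), zero_mul, smul_zero]
  have hforb : f ∈ MulAction.orbit G f := ⟨1, one_smul G f⟩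
  have hTf : ∀ a b : F, a ∈ MulAction.orbit G f → b ∈ MulAction.orbit G f →
      (T a b).card = (T f f).card := by
    rintro a b ⟨ga, hga⟩ ⟨gb, hgb⟩
    replace hga : ga • f = a := hga
    replace hgb : gb • f = b := hgb
    refine Finset.card_bij (fun g _ => ga⁻¹ * g * gb) ?_ ?_ ?_
    · intro g hg
      rw [hTmem] at hg ⊢
      rw [mul_smul, mul_smul, hgb, hg, ← hga, inv_smul_smul]
    · intro g1 h1 g2 h2 hgg
      have := mul_left_cancel (mul_right_cancel hgg)
      exact this
    · intro g' hg'
      rw [hTmem] at hg'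
      refine ⟨ga * g' * gb⁻¹, ?_, by group⟩
      rw [hTmem, mul_smul, mul_smul, ← hgb, inv_smul_smul, hg', hga]
  have hTn : ∀ a b : F, a ∈ MulAction.orbit G f → b ∈ MulAction.orbit G f →
      (T a b).card * r = n := by
    intro a b ha hb
    have hex : ∀ g : G, ∃ u : Fin r, s u • f = g • f := fun g => hsorb _ ⟨g, rfl⟩
    choose idx hidx using hex
    have hcardsum : n = ∑ u : Fin r, (Finset.univ.filter fun g : G => idx g = u).card := by
      rw [hn, ← Finset.card_univ,
        Finset.card_eq_sum_card_fiberwise (fun g _ => Finset.mem_univ (idx g))]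
    have hfib : ∀ u : Fin r, (Finset.univ.filter fun g : G => idx g = u) = T (s u • f) f := by
      intro u
      ext g
      simp only [Finset.mem_filter, Finset.mem_univ, true_and, hTmem]
      constructor
      · rintro rfl
        exact (hidx g).symm
      · intro h
        exact hsinj (show s (idx g) • f = s u • f from (hidx g).trans h)
    have : ∀ u : Fin r, (Finset.univ.filter fun g : G => idx g = u).card = (T a b).card := by
      intro u
      rw [hfib u, hTf _ _ (horb u) hforb, hTf a b ha hb]
    rw [mul_comm, hcardsum, Finset.sum_congr rfl fun u _ => this u, Finset.sum_const,
      Finset.card_univ, Fintype.card_fin, smul_eq_mul]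
  have hr0 : (r : k) ≠ 0 := by
    intro h0
    apply hcard
    rw [← hTn f f hforb hforb]
    push_cast
    rw [h0, mul_zero]
  have hrpos : 0 < r := by
    rcases Nat.eq_zero_or_pos r with h | h
    · exact absurd (by rw [h]; norm_num : (r : k) = 0) hr0
    · exact h
  have hL : ∀ a b c : F, a ∈ MulAction.orbit G f → b ∈ MulAction.orbit G f →
      (D a * e m * D b) * (e m * D c) = (r : k)⁻¹ • (D a * e m * D c) := by
    intro a b c ha hb
    rw [hDeD a b, smul_mul_assoc, Finset.sum_mul]
    have hterm : ∀ g ∈ T a b,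
        (((χ m g : kˣ) : k) • (D a * ιG g)) * (e m * D c) = D a * e m * D c := by
      intro g hg
      have h1 : (D a * ιG g) * (e m * D c) = (((χ m g)⁻¹ : kˣ) : k) • (D a * e m * D c) := by
        calc (D a * ιG g) * (e m * D c) = D a * ((ιG g * e m) * D c) := by
              simp only [mul_assoc]
          _ = (((χ m g)⁻¹ : kˣ) : k) • (D a * e m * D c) := by
              rw [hge, smul_mul_assoc, mul_smul_comm, mul_assoc]
      rw [smul_mul_assoc, h1, smul_smul]
      norm_cast
      rw [mul_inv_cancel, Units.val_one, one_smul]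
    rw [Finset.sum_congr rfl hterm, Finset.sum_const, ← Nat.cast_smul_eq_nsmul k, smul_smul]
    congr 1
    have hcn := hTn a b ha hb
    have hTk : ((T a b).card : k) * (r : k) = (n : k) := by exact_mod_cast congrArg (Nat.cast : ℕ → k) hcn
    field_simp
    linear_combination hTk
  have hDap : ∀ x : F, ιB (Pi.single x 1) = D x := fun x => rfl
  have hmul : ∀ u v p q : Fin r, E u v * E p q = if v = p then E u q else 0 := by
    intro u v p q
    rw [hE u v, hE p q, smul_mul_assoc, mul_smul_comm, smul_smul]
    simp only [hDap]
    by_cases hvp : v = p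
    · subst hvp
      rw [if_pos rfl]
      have hvv := hD (s v • f) (s v • f)
      rw [if_pos rfl] at hvv
      have key : (D (s u • f) * e m * D (s v • f)) * (D (s v • f) * e m * D (s q • f))
          = (D (s u • f) * e m * D (s v • f)) * (e m * D (s q • f)) := by
        have h2 : (D (s u • f) * e m * D (s v • f)) * D (s v • f)
            = D (s u • f) * e m * D (s v • f) := by
          rw [mul_assoc (D (s u • f) * e m), hvv]
        calc (D (s u • f) * e m * D (s v • f)) * (D (s v • f) * e m * D (s q • f))
            = ((D (s u • f) * e m * D (s v • f)) * D (s v • f)) * (e m * D (s q • f)) := by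
              simp only [mul_assoc]
          _ = (D (s u • f) * e m * D (s v • f)) * (e m * D (s q • f)) := by rw [h2]
      rw [key, hL _ _ _ (horb u) (horb v), smul_smul, hE u q]
      simp only [hDap]
      congr 1
      rw [mul_assoc, mul_inv_cancel₀ hr0, mul_one]
    · rw [if_neg hvp]
      have hD0 : D (s v • f) * D (s p • f) = 0 := by
        rw [hD, if_neg (fun h => hvp (hsinj h))]
      have key : (D (s u • f) * e m * D (s v • f)) * (D (s p • f) * e m * D (s q • f)) = 0 := by
        calc (D (s u • f) * e m * D (s v • f)) * (D (s p • f) * e m * D (s q • f))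
            = (D (s u • f) * e m) * ((D (s v • f) * D (s p • f)) * (e m * D (s q • f))) := by
              simp only [mul_assoc]
          _ = 0 := by rw [hD0, zero_mul, mul_zero]
      rw [key, smul_zero]
  have hbA' : ∀ (x : F) (g : G), D x * ιG g = bA (x, g) := fun x g => (hbA (x, g)).symm
  have hg0 : ∀ u v : Fin r, (s u * (s v)⁻¹) ∈ T (s u • f) (s v • f) := by
    intro u v
    rw [hTmem, smul_smul, inv_mul_cancel_right]
  have hET : ∀ u v : Fin r, E u v = ∑ g ∈ T (s u • f) (s v • f),
      ((r : k) * (n : k)⁻¹ * ((χ m g : kˣ) : k)) • bA (s u • f, g) := by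
    intro u v
    rw [hE]
    simp only [hDap]
    rw [hDeD, smul_smul, Finset.smul_sum]
    refine Finset.sum_congr rfl fun g _ => ?_
    rw [smul_smul, hbA', mul_assoc]
  have hEne : ∀ u v : Fin r, E u v ≠ 0 := by
    intro u v hz
    have h2 : (bA.repr (E u v)) (s u • f, s u * (s v)⁻¹)
        = (r : k) * (n : k)⁻¹ * ((χ m (s u * (s v)⁻¹) : kˣ) : k) := by
      rw [hET, map_sum, Finsupp.finset_sum_apply]
      have hterm : ∀ g ∈ T (s u • f) (s v • f),
          (bA.repr (((r : k) * (n : k)⁻¹ * ((χ m g : kˣ) : k)) • bA (s u • f, g)))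
            (s u • f, s u * (s v)⁻¹)
          = if g = s u * (s v)⁻¹ then (r : k) * (n : k)⁻¹ * ((χ m g : kˣ) : k) else 0 := by
        intro g _
        rw [map_smul, Module.Basis.repr_self, Finsupp.smul_apply, Finsupp.single_apply]
        rw [if_congr (show ((s u • f, g) : F × G) = (s u • f, s u * (s v)⁻¹) ↔
          g = s u * (s v)⁻¹ by simp) rfl rfl]
        split_ifs <;> simp
      rw [Finset.sum_congr rfl hterm, Finset.sum_ite_eq' _ (s u * (s v)⁻¹), if_pos (hg0 u v)]
    rw [hz, map_zero, Finsupp.zero_apply] at h2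
    exact (mul_ne_zero (mul_ne_zero hr0 (inv_ne_zero hcard)) (Units.ne_zero _)) h2.symm
  have hsand : ∀ (c : Fin r × Fin r → k) (u p q v : Fin r),
      E u p * (∑ j : Fin r × Fin r, c j • E j.1 j.2) * E q v = c (p, q) • E u v := by
    intro c u p q v
    rw [Finset.mul_sum, Finset.sum_mul]
    have hterm : ∀ j : Fin r × Fin r,
        E u p * (c j • E j.1 j.2) * E q v = if j = (p, q) then c j • E u v else 0 := by
      intro j
      rw [mul_smul_comm, smul_mul_assoc, hmul]
      by_cases h1 : p = j.1
      · rw [if_pos h1, hmul]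
        by_cases h2 : j.2 = q
        · rw [if_pos h2, if_pos (Prod.ext h1.symm h2)]
        · rw [if_neg h2, smul_zero, if_neg (fun hj => h2 (by rw [hj]))]
      · rw [if_neg h1, zero_mul, smul_zero, if_neg (fun hj => h1 (by rw [hj]))]
    rw [Finset.sum_congr rfl (fun j _ => hterm j), Finset.sum_ite_eq' _ (p, q),
      if_pos (Finset.mem_univ _)]
  have hlin : LinearIndependent k (fun uv : Fin r × Fin r => E uv.1 uv.2) := by
    rw [Fintype.linearIndependent_iff]
    intro c hc i
    obtain ⟨u, v⟩ := i
    have h2 := hsand c u u v v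
    rw [hc, mul_zero, zero_mul] at h2
    rcases smul_eq_zero.1 h2.symm with h | h
    · exact h
    · exact absurd h (hEne u v)
  set M := Submodule.span k {x : A | ∃ u v : Fin r, x = E u v} with hM
  have hEmem : ∀ u v : Fin r, E u v ∈ M := fun u v => Submodule.subset_span ⟨u, v, rfl⟩
  have hGE : ∀ (g : G) (u v : Fin r), ∃ u' : Fin r,
      ιG g * E u v = (((χ m g)⁻¹ : kˣ) : k) • E u' v := by
    intro g u v
    obtain ⟨u', hu'⟩ := hsorb (g • (s u • f)) ⟨g * s u, mul_smul g (s u) f⟩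
    refine ⟨u', ?_⟩
    rw [hE, hE]
    simp only [hDap]
    rw [mul_smul_comm, smul_comm]
    congr 1
    calc ιG g * (D (s u • f) * e m * D (s v • f))
        = ((ιG g * D (s u • f)) * e m) * D (s v • f) := by simp only [mul_assoc]
      _ = ((D (g • (s u • f)) * ιG g) * e m) * D (s v • f) := by rw [hgD]
      _ = (D (g • (s u • f)) * (ιG g * e m)) * D (s v • f) := by rw [mul_assoc (D _)]
      _ = (((χ m g)⁻¹ : kˣ) : k) • (D (s u' • f) * e m * D (s v • f)) := by
          rw [hge, mul_smul_comm, smul_mul_assoc, hu']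
  have hEG : ∀ (g : G) (u v : Fin r), ∃ v' : Fin r,
      E u v * ιG g = (((χ m g)⁻¹ : kˣ) : k) • E u v' := by
    intro g u v
    obtain ⟨v', hv'⟩ := hsorb (g⁻¹ • (s v • f)) ⟨g⁻¹ * s v, mul_smul g⁻¹ (s v) f⟩
    refine ⟨v', ?_⟩
    rw [hE, hE]
    simp only [hDap]
    rw [smul_mul_assoc, smul_comm]
    congr 1
    have hDg : D (s v • f) * ιG g = ιG g * D (s v' • f) := by
      rw [hv', hgD g (g⁻¹ • (s v • f)), smul_inv_smul]
    calc (D (s u • f) * e m * D (s v • f)) * ιG g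
        = (D (s u • f) * e m) * (D (s v • f) * ιG g) := mul_assoc _ _ _
      _ = (D (s u • f) * e m) * (ιG g * D (s v' • f)) := by rw [hDg]
      _ = D (s u • f) * ((e m * ιG g) * D (s v' • f)) := by simp only [mul_assoc]
      _ = (((χ m g)⁻¹ : kˣ) : k) • (D (s u • f) * e m * D (s v' • f)) := by
          rw [heg, smul_mul_assoc, mul_smul_comm, mul_assoc]
  have hBE : ∀ (x : F) (u v : Fin r), D x * E u v = if x = s u • f then E u v else 0 := by
    intro x u v
    rw [hE]
    simp only [hDap]
    rw [mul_smul_comm, ← mul_assoc, ← mul_assoc, hD]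
    split_ifs with h
    · rw [h]
    · rw [zero_mul, zero_mul, smul_zero]
  have hEB : ∀ (x : F) (u v : Fin r), E u v * D x = if x = s v • f then E u v else 0 := by
    intro x u v
    rw [hE]
    simp only [hDap]
    rw [smul_mul_assoc, mul_assoc, hD]
    by_cases h : x = s v • f
    · rw [if_pos h.symm, if_pos h]
    · rw [if_neg (fun hh => h hh.symm), if_neg h, mul_zero, smul_zero]
  have hbAE : ∀ (p : F × G) (u v : Fin r), bA p * E u v ∈ M := by
    intro p u v
    obtain ⟨u', hu'⟩ := hGE p.2 u v
    rw [hbA p]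
    simp only [hDap]
    rw [mul_assoc, hu', mul_smul_comm, hBE]
    split_ifs
    · exact Submodule.smul_mem _ _ (hEmem u' v)
    · rw [smul_zero]
      exact Submodule.zero_mem _
  have hEbA : ∀ (p : F × G) (u v : Fin r), E u v * bA p ∈ M := by
    intro p u v
    rw [hbA p]
    simp only [hDap]
    rw [← mul_assoc, hEB]
    split_ifs
    · obtain ⟨v', hv'⟩ := hEG p.2 u v
      rw [hv']
      exact Submodule.smul_mem _ _ (hEmem u v')
    · rw [zero_mul]
      exact Submodule.zero_mem _
  have hidealL : ∀ (a x : A), x ∈ M → a * x ∈ M := by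
    intro a x hx
    induction hx using Submodule.span_induction with
    | mem y hy =>
      obtain ⟨u, v, rfl⟩ := hy
      have hdec : a = ∑ p : F × G, bA.repr a p • bA p := (bA.sum_repr a).symm
      rw [hdec, Finset.sum_mul]
      exact Submodule.sum_mem _ fun p _ => by
        rw [smul_mul_assoc]
        exact Submodule.smul_mem _ _ (hbAE p u v)
    | zero =>
      rw [mul_zero]
      exact Submodule.zero_mem _
    | add y z hy hz ihy ihz =>
      rw [mul_add]
      exact Submodule.add_mem _ ihy ihz
    | smul c y hy ih =>
      rw [mul_smul_comm]
      exact Submodule.smul_mem _ _ ih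
  have hidealR : ∀ (a x : A), x ∈ M → x * a ∈ M := by
    intro a x hx
    induction hx using Submodule.span_induction with
    | mem y hy =>
      obtain ⟨u, v, rfl⟩ := hy
      have hdec : a = ∑ p : F × G, bA.repr a p • bA p := (bA.sum_repr a).symm
      rw [hdec, Finset.mul_sum]
      exact Submodule.sum_mem _ fun p _ => by
        rw [mul_smul_comm]
        exact Submodule.smul_mem _ _ (hEbA p u v)
    | zero =>
      rw [zero_mul]
      exact Submodule.zero_mem _
    | add y z hy hz ihy ihz =>
      rw [add_mul]
      exact Submodule.add_mem _ ihy ihz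
    | smul c y hy ih =>
      rw [smul_mul_assoc]
      exact Submodule.smul_mem _ _ ih
  have hSrange : {x : A | ∃ u v : Fin r, x = E u v}
      = Set.range (fun uv : Fin r × Fin r => E uv.1 uv.2) := by
    ext x
    constructor
    · rintro ⟨u, v, rfl⟩
      exact ⟨(u, v), rfl⟩
    · rintro ⟨⟨u, v⟩, rfl⟩
      exact ⟨u, v, rfl⟩
  have hMne : M ≠ ⊥ := by
    intro hbot
    have u0 : Fin r := ⟨0, hrpos⟩
    exact hEne u0 u0 (by simpa [hbot, Submodule.mem_bot] using hEmem u0 u0)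
  refine ⟨hmul, hlin, fun a x hx => ⟨hidealL a x hx, hidealR a x hx⟩, hMne, ?_, ?_⟩
  · -- minimality
    intro J hJ hJM
    by_cases hJ0 : J = ⊥
    · exact Or.inl hJ0
    refine Or.inr ?_
    obtain ⟨x, hxJ, hx0⟩ := (Submodule.ne_bot_iff J).1 hJ0
    have hxM : x ∈ M := hJM hxJ
    rw [hM, hSrange, Submodule.mem_span_range_iff_exists_fun] at hxM
    obtain ⟨c, hc⟩ := hxM
    have hex : ∃ j : Fin r × Fin r, c j ≠ 0 := by
      by_contra hall
      push_neg at hall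
      apply hx0
      rw [← hc]
      exact Finset.sum_eq_zero fun j _ => by rw [hall j, zero_smul]
    obtain ⟨⟨p, q⟩, hpq⟩ := hex
    have hEJ : ∀ u v : Fin r, E u v ∈ M → E u v ∈ J := by
      intro u v _
      have hcomp : E u p * x * E q v = c (p, q) • E u v := by
        rw [← hc]
        exact hsand c u p q v
      have h1 : E u p * x * E q v ∈ J := (hJ (E q v) _ (hJ (E u p) x hxJ).1).2
      have h2 : E u v = (c (p, q))⁻¹ • (E u p * x * E q v) := by
        rw [hcomp, smul_smul, inv_mul_cancel₀ hpq, one_smul]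
      rw [h2]
      exact Submodule.smul_mem _ _ h1
    refine le_antisymm hJM ?_
    rw [hM, Submodule.span_le]
    rintro y ⟨u, v, rfl⟩
    exact hEJ u v (hEmem u v)
  · -- matrix algebra
    refine ⟨{ toFun := fun X => ∑ j : Fin r × Fin r, X j.1 j.2 • E j.1 j.2
              map_add' := by
                intro X Y
                rw [← Finset.sum_add_distrib]
                exact Finset.sum_congr rfl fun j _ => by
                  rw [Matrix.add_apply, add_smul]
              map_smul' := by
                intro c X
                rw [RingHom.id_apply, Finset.smul_sum]
                exact Finset.sum_congr rfl fun j _ => by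
                  rw [Matrix.smul_apply, smul_smul, smul_eq_mul] }, ?_, ?_, ?_⟩
    · rw [injective_iff_map_eq_zero]
      intro X hX
      have hX' : ∑ j : Fin r × Fin r, X j.1 j.2 • E j.1 j.2 = 0 := hX
      have := Fintype.linearIndependent_iff.1 hlin (fun j => X j.1 j.2) hX'
      ext u v
      exact this (u, v)
    · refine le_antisymm ?_ ?_
      · rintro y ⟨X, rfl⟩
        exact Submodule.sum_mem _ fun j _ => Submodule.smul_mem _ _ (hEmem j.1 j.2)
      · rw [Submodule.span_le]
        rintro y ⟨u, v, rfl⟩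
        refine ⟨Matrix.single u v 1, ?_⟩
        show ∑ j : Fin r × Fin r, Matrix.single u v 1 j.1 j.2 • E j.1 j.2 = E u v
        rw [Finset.sum_eq_single (u, v)]
        · rw [Matrix.single_apply_same, one_smul]
        · intro j _ hj
          rw [Matrix.single_apply_of_ne, zero_smul]
          intro hcon
          exact hj (Prod.ext hcon.1.symm hcon.2.symm)
        · intro hcon
          exact absurd (Finset.mem_univ _) hcon
    · intro X Y
      show ∑ j : Fin r × Fin r, (X * Y) j.1 j.2 • E j.1 j.2
        = (∑ j : Fin r × Fin r, X j.1 j.2 • E j.1 j.2)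
          * ∑ j : Fin r × Fin r, Y j.1 j.2 • E j.1 j.2
      rw [Finset.sum_mul_sum]
      simp only [Fintype.sum_prod_type, Matrix.mul_apply, Finset.sum_smul]
      -- LHS : ∑ u ∑ v ∑ w, (X u w * Y w v) • E u v
      -- RHS : ∑ u ∑ w ∑ p ∑ v, (X u w • E u w) * (Y p v • E p v)
      refine Finset.sum_congr rfl fun u _ => ?_
      rw [Finset.sum_comm]
      refine Finset.sum_congr rfl fun w _ => ?_
      -- now: ∑ v, (X u w * Y w v) • E u v = ∑ p ∑ v, (X u w • E u w) * (Y p v • E p v)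
      have hterm : ∀ p v : Fin r, (X u w • E u w) * (Y p v • E p v)
          = if p = w then (X u w * Y w v) • E u v else 0 := by
        intro p v
        rw [smul_mul_assoc, mul_smul_comm, hmul, smul_smul]
        by_cases h : w = p
        · subst h
          rw [if_pos rfl, if_pos rfl]
        · rw [if_neg h, if_neg (fun hh => h hh.symm), smul_zero]
      calc ∑ v : Fin r, (X u w * Y w v) • E u v
          = ∑ p : Fin r, ∑ v : Fin r, (if p = w then (X u w * Y w v) • E u v else 0) := by
            rw [Finset.sum_comm]
            refine Finset.sum_congr rfl fun v _ => ?_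
            rw [Finset.sum_ite_eq' _ w, if_pos (Finset.mem_univ _)]
        _ = ∑ p : Fin r, ∑ v : Fin r, (X u w • E u w) * (Y p v • E p v) := by
            exact Finset.sum_congr rfl fun p _ => Finset.sum_congr rfl fun v _ =>
              (hterm p v).symm
end

section
/- In the setting where B is a power of k with primitive idempotent basis F permuted by the finite abelian group G, two minimal ideals of B # k[G] coincide, M_{f,m} = M_{f',m'}, if and only if f and f' lie in the same G-orbit and m + I_f = m' + I_f, where I_f = {z : χ_z(y) = 1 for all y in the stabilizer of f}. -/
open MulAction Finset

lemma aux_stab {G F : Type} [CommGroup G] [MulAction G F] {f x : F}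
    (hx : x ∈ orbit G f) : stabilizer G x = stabilizer G f := by
  obtain ⟨g, rfl⟩ := hx
  ext s
  simp only [mem_stabilizer_iff]
  rw [smul_comm s g f]
  exact smul_left_cancel_iff g

section Aux
variable {k G F A : Type} [Field k] [CommGroup G] [Fintype G]
    [Fintype F] [DecidableEq F] [MulAction G F]
    (χ : G →* G →* kˣ)
    [Ring A] [Algebra k A] (ιB : (F → k) →ₐ[k] A) (ιG : G →* A)
    (hcomm : ∀ (g : G) (b : F → k), ιG g * ιB b = ιB (fun x => b (g⁻¹ • x)) * ιG g)
    (bA : Module.Basis (F × G) k A)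
    (hbA : ∀ p : F × G, bA p = ιB (Pi.single p.1 1) * ιG p.2)
    (e : G → A)
    (he : ∀ m : G, e m = (Fintype.card G : k)⁻¹ • ∑ g : G, ((χ m g : kˣ) : k) • ιG g)

include hbA in
omit [Fintype G] [MulAction G F] in
lemma aux_iB_iG (d : F → k) (g : G) : ιB d * ιG g = ∑ x, d x • bA (x, g) := by
  have hd : d = ∑ x, d x • (Pi.single x (1:k) : F → k) := by
    funext y; simp [Pi.single_apply]
  conv_lhs => rw [hd]
  rw [map_sum, Finset.sum_mul]
  refine Finset.sum_congr rfl fun x _ => ?_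
  rw [map_smul, smul_mul_assoc, hbA (x, g)]

include hcomm hbA he in
lemma aux_prod (b c : F → k) (m : G) :
    ιB b * e m * ιB c = (Fintype.card G : k)⁻¹ •
      ∑ p : F × G, (((χ m p.2 : kˣ) : k) * (b p.1 * c (p.2⁻¹ • p.1))) • bA p := by
  rw [he m]
  rw [mul_smul_comm, smul_mul_assoc]
  congr 1
  rw [Finset.mul_sum, Finset.sum_mul]
  rw [Fintype.sum_prod_type_right]
  refine Finset.sum_congr rfl fun g _ => ?_
  have h1 : ιB b * ((χ m g : kˣ) : k) • ιG g * ιB c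
      = ((χ m g : kˣ) : k) • (ιB b * (ιG g * ιB c)) := by
    rw [mul_smul_comm, smul_mul_assoc, mul_assoc]
  rw [h1, hcomm g c, ← mul_assoc, ← map_mul]
  have h2 : ιB (b * fun x => c (g⁻¹ • x)) * ιG g
      = ∑ x, (b x * c (g⁻¹ • x)) • bA (x, g) := aux_iB_iG ιB ιG bA hbA _ g
  rw [h2, Finset.smul_sum]
  refine Finset.sum_congr rfl fun x _ => ?_
  rw [smul_smul]

include hcomm hbA he in
lemma aux_repr (b c : F → k) (m : G) (p : F × G) :
    bA.repr (ιB b * e m * ιB c) p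
      = (Fintype.card G : k)⁻¹ * (((χ m p.2 : kˣ) : k) * (b p.1 * c (p.2⁻¹ • p.1))) := by
  rw [aux_prod χ ιB ιG hcomm bA hbA e he b c m, map_smul, Finsupp.smul_apply]
  have h := bA.repr_sum_self
    (fun p : F × G => ((χ m p.2 : kˣ) : k) * (b p.1 * c (p.2⁻¹ • p.1)))
  rw [h]
  simp [smul_eq_mul]
include hcomm hbA he in
lemma aux_mem (hcard : (Fintype.card G : k) ≠ 0) (f : F) (m : G) (a : A) :
    a ∈ Submodule.span k {x : A | ∃ b : F → k, (∀ z : F, z ∉ orbit G f → b z = 0) ∧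
        ∃ c : F → k, x = (ιB b * e m) * ιB c} ↔
      ((∀ p : F × G, p.1 ∉ orbit G f → bA.repr a p = 0) ∧
       ∀ (x : F) (g s : G), s ∈ stabilizer G f →
          bA.repr a (x, s * g) = ((χ m s : kˣ) : k) * bA.repr a (x, g)) := by
  classical
  have AR := aux_repr χ ιB ιG hcomm bA hbA e he
  constructor
  · intro ha
    induction ha using Submodule.span_induction with
    | mem x hx =>
      obtain ⟨b, hb, c, rfl⟩ := hx
      constructor
      · intro p hp
        rw [AR b c m p, hb p.1 hp]
        ring
      · intro x g s hs
        by_cases hx : x ∈ orbit G f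
        · have hsx : s⁻¹ • x = x := by
            have : s⁻¹ ∈ stabilizer G x := by
              rw [aux_stab hx]; exact inv_mem hs
            exact this
          rw [AR b c m (x, s * g), AR b c m (x, g)]
          have h1 : ((x, s * g) : F × G).2⁻¹ • ((x, s*g) : F × G).1 = g⁻¹ • x := by
            simp only [mul_inv_rev, mul_smul, hsx]
          simp only [h1, map_mul]
          push_cast
          ring
        · rw [AR b c m (x, s * g), AR b c m (x, g), hb x hx]
          ring
    | zero => simp
    | add x y _ _ ihx ihy =>
      refine ⟨fun p hp => ?_, fun x' g s hs => ?_⟩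
      · rw [map_add, Finsupp.add_apply, ihx.1 p hp, ihy.1 p hp, add_zero]
      · rw [map_add, Finsupp.add_apply, Finsupp.add_apply, ihx.2 x' g s hs,
          ihy.2 x' g s hs]
        ring
    | smul t x _ ih =>
      refine ⟨fun p hp => ?_, fun x' g s hs => ?_⟩
      · rw [map_smul, Finsupp.smul_apply, ih.1 p hp, smul_zero]
      · rw [map_smul, Finsupp.smul_apply, Finsupp.smul_apply, ih.2 x' g s hs,
          smul_eq_mul, smul_eq_mul]
        ring
  · rintro ⟨h1, h2⟩
    set N := stabilizer G f with hN
    have hcN : ((Fintype.card ↥N : ℕ) : k) ≠ 0 := by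
      obtain ⟨t, ht⟩ := Subgroup.card_subgroup_dvd_card N
      intro h0
      apply hcard
      have hGN : (Fintype.card G : ℕ) = Fintype.card ↥N * t := by
        rw [← Nat.card_eq_fintype_card, ht, Nat.card_eq_fintype_card]
      rw [hGN]
      push_cast
      rw [h0, zero_mul]
    set d : F × G → k := fun p =>
      (Fintype.card G : k) * ((Fintype.card ↥N : ℕ) : k)⁻¹ * (((χ m p.2)⁻¹ : kˣ) : k)
        * bA.repr a p with hd
    set gen : F × G → A := fun p =>
      ιB (Pi.single p.1 1) * e m * ιB (Pi.single (p.2⁻¹ • p.1) 1) with hgen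
    have key : a = ∑ p : F × G, d p • gen p := by
      apply bA.repr.injective
      ext q
      obtain ⟨x, g⟩ := q
      rw [map_sum, Finsupp.finset_sum_apply]
      have step1 : ∀ p : F × G, bA.repr (d p • gen p) (x, g)
          = d p * ((Fintype.card G : k)⁻¹ * (((χ m g : kˣ) : k) *
            ((Pi.single p.1 1 : F → k) x * (Pi.single (p.2⁻¹ • p.1) 1 : F → k) (g⁻¹ • x)))) := by
        intro p
        rw [map_smul, Finsupp.smul_apply, smul_eq_mul, hgen]
        rw [AR (Pi.single p.1 1) (Pi.single (p.2⁻¹ • p.1) 1) m (x, g)]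
      simp only [step1]
      rw [Fintype.sum_prod_type]
      rw [Finset.sum_eq_single x (fun x₀ _ hne => by
        apply Finset.sum_eq_zero
        intro g₀ _
        rw [Pi.single_eq_of_ne (Ne.symm hne)]
        ring) (fun h => absurd (Finset.mem_univ x) h)]
      by_cases hx : x ∈ orbit G f
      · have hstab : stabilizer G x = N := aux_stab hx
        rw [← Fintype.sum_equiv (Equiv.mulRight g)
          (fun s => d (x, s * g) * ((Fintype.card G : k)⁻¹ * (((χ m g : kˣ) : k) *
            ((Pi.single x 1 : F → k) x *
             (Pi.single ((s * g)⁻¹ • x) 1 : F → k) (g⁻¹ • x)))))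
          _ (fun s => rfl)]
        have step2 : ∀ s : G, d (x, s * g) * ((Fintype.card G : k)⁻¹ * (((χ m g : kˣ) : k) *
            ((Pi.single x 1 : F → k) x *
             (Pi.single ((s * g)⁻¹ • x) 1 : F → k) (g⁻¹ • x))))
            = if s ∈ N then ((Fintype.card ↥N : ℕ) : k)⁻¹ * bA.repr a (x, g) else 0 := by
          intro s
          by_cases hs : s ∈ N
          · have hsx : s⁻¹ • x = x := by
              have : s⁻¹ ∈ stabilizer G x := by rw [hstab]; exact inv_mem hs
              exact this
            have hcond : (s * g)⁻¹ • x = g⁻¹ • x := by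
              rw [mul_inv_rev, mul_smul, hsx]
            rw [if_pos hs, hcond, Pi.single_eq_same, Pi.single_eq_same]
            simp only [hd]
            rw [h2 x g s hs, map_mul]
            simp only [mul_inv, Units.val_mul, Units.val_inv_eq_inv_val]
            have u1 : ((χ m s : kˣ) : k) ≠ 0 := Units.ne_zero _
            have u2 : ((χ m g : kˣ) : k) ≠ 0 := Units.ne_zero _
            field_simp [hcard, u1, u2, hcN]
          · have hsx : ¬ (s⁻¹ • x = x) := by
              intro hcontra
              apply hs
              rw [← hstab]
              have : s⁻¹ ∈ stabilizer G x := hcontra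
              simpa using inv_mem this
            have hcond : ¬ (g⁻¹ • x = (s * g)⁻¹ • x) := by
              rw [mul_inv_rev, mul_smul]
              intro hcontra
              exact hsx (smul_left_cancel g⁻¹ hcontra).symm
            rw [if_neg hs, Pi.single_eq_of_ne hcond]
            ring
        rw [Fintype.sum_congr _ _ step2]
        rw [← Finset.sum_filter, Finset.sum_const]
        have hfilter : (Finset.univ.filter (fun s : G => s ∈ N)).card
            = Fintype.card ↥N := by
          rw [Fintype.card_subtype]
        rw [hfilter, nsmul_eq_mul, ← mul_assoc, mul_inv_cancel₀ hcN, one_mul]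
      · rw [h1 (x, g) hx]
        symm
        apply Finset.sum_eq_zero
        intro g₀ _
        have hd0 : d (x, g₀) = 0 := by
          rw [hd]
          show (Fintype.card G : k) * ((Fintype.card ↥N : ℕ) : k)⁻¹
              * (((χ m (x, g₀).2)⁻¹ : kˣ) : k) * bA.repr a (x, g₀) = 0
          rw [h1 (x, g₀) hx, mul_zero]
        rw [hd0, zero_mul]
    rw [key]
    apply Submodule.sum_mem
    intro p _
    by_cases hp : p.1 ∈ orbit G f
    · apply Submodule.smul_mem
      apply Submodule.subset_span
      refine ⟨Pi.single p.1 1, fun z hz => ?_, Pi.single (p.2⁻¹ • p.1) 1, rfl⟩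
      apply Pi.single_eq_of_ne
      intro hzp
      exact hz (hzp ▸ hp)
    · have hd0 : d p = 0 := by
        simp only [hd]
        rw [h1 p hp]
        ring
      rw [hd0, zero_smul]
      exact Submodule.zero_mem _
end Aux


/-- In the setting where `B = F → k` is a power of `k` with primitive
idempotent basis `F` permuted by the finite abelian group `G` (with character pairing `χ`),
and `A = B # k[G]` is the smash product (presented by `ιB`, `ιG`) with character idempotents
`e_m`, two minimal ideals `M_{f,m} = (span O_f # e_m)(B # 1)` coincide, `M_{f,m} = M_{f',m'}`,
if and only if `f` and `f'` lie in the same `G`-orbit and `m + I_f = m' + I_f`, where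
`I_f = {z : χ z y = 1 for all y in the stabilizer of f}`. -/
theorem stmt17 (k G F A : Type) [Field k] [CommGroup G] [Fintype G]
    [Fintype F] [DecidableEq F] [MulAction G F]
    (χ : G →* G →* kˣ)
    (hχ : ∀ m : G, m ≠ 1 → ∑ g : G, ((χ m g : kˣ) : k) = 0)
    (hχ' : ∀ g : G, g ≠ 1 → ∑ m : G, ((χ m g : kˣ) : k) = 0)
    (lam : k) (hlam : IsPrimitiveRoot lam (Fintype.card G))
    (hcard : (Fintype.card G : k) ≠ 0)
    [Ring A] [Algebra k A] (ιB : (F → k) →ₐ[k] A) (ιG : G →* A)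
    (hcomm : ∀ (g : G) (b : F → k), ιG g * ιB b = ιB (fun x => b (g⁻¹ • x)) * ιG g)
    (bA : Module.Basis (F × G) k A)
    (hbA : ∀ p : F × G, bA p = ιB (Pi.single p.1 1) * ιG p.2)
    (e : G → A)
    (he : ∀ m : G, e m = (Fintype.card G : k)⁻¹ • ∑ g : G, ((χ m g : kˣ) : k) • ιG g)
    (M : F → G → Submodule k A)
    (hM : ∀ (f : F) (m : G), M f m = Submodule.span k
      {x : A | ∃ b : F → k, (∀ z : F, z ∉ MulAction.orbit G f → b z = 0) ∧
        ∃ c : F → k, x = (ιB b * e m) * ιB c})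
    (f f' : F) (m m' : G) :
    M f m = M f' m' ↔
      (f' ∈ MulAction.orbit G f ∧
        ∀ y ∈ MulAction.stabilizer G f, χ (m⁻¹ * m') y = 1) := by
  classical
  have hrepr : ∀ (b c : F → k) (m0 : G) (p : F × G),
      bA.repr (ιB b * e m0 * ιB c) p
        = (Fintype.card G : k)⁻¹ * (((χ m0 p.2 : kˣ) : k) * (b p.1 * c (p.2⁻¹ • p.1))) :=
    aux_repr χ ιB ιG hcomm bA hbA e he
  constructor
  · intro h
    set a₀ : A := ιB (Pi.single f' 1) * e m' * ιB (Pi.single f' 1) with ha₀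
    have hmem' : a₀ ∈ M f' m' := by
      rw [hM f' m']
      apply Submodule.subset_span
      refine ⟨Pi.single f' 1, fun z hz => ?_, Pi.single f' 1, rfl⟩
      exact Pi.single_eq_of_ne (fun hzp => hz (by rw [hzp]; exact mem_orbit_self f')) 1
    have hmem : a₀ ∈ M f m := h ▸ hmem'
    rw [hM f m, aux_mem χ ιB ιG hcomm bA hbA e he hcard f m a₀] at hmem
    obtain ⟨h1, h2⟩ := hmem
    have hr1 : bA.repr a₀ (f', 1) = (Fintype.card G : k)⁻¹ := by
      rw [ha₀, hrepr (Pi.single f' 1) (Pi.single f' 1) m' (f', 1)]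
      simp
    have horb : f' ∈ orbit G f := by
      by_contra hf'
      have h0 := h1 (f', 1) hf'
      rw [hr1] at h0
      exact inv_ne_zero hcard h0
    refine ⟨horb, fun y hy => ?_⟩
    have hyy := h2 f' 1 y hy
    rw [mul_one, hr1] at hyy
    have hstab' : y⁻¹ • f' = f' := by
      have hmem2 : y⁻¹ ∈ stabilizer G f' := by
        rw [aux_stab horb]; exact inv_mem hy
      exact hmem2
    have hr2 : bA.repr a₀ (f', y) = (Fintype.card G : k)⁻¹ * ((χ m' y : kˣ) : k) := by
      rw [ha₀, hrepr (Pi.single f' 1) (Pi.single f' 1) m' (f', y)]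
      show (Fintype.card G : k)⁻¹ * (((χ m' y : kˣ) : k)
        * ((Pi.single f' 1 : F → k) f' * (Pi.single f' 1 : F → k) (y⁻¹ • f'))) = _
      rw [hstab', Pi.single_eq_same]
      ring
    rw [hr2] at hyy
    have hval : ((χ m' y : kˣ) : k) = ((χ m y : kˣ) : k) := by
      have := mul_left_cancel₀ (inv_ne_zero hcard)
        (hyy.trans (mul_comm _ _))
      exact this
    have hu : χ m' y = χ m y := Units.ext hval
    have hsplit : χ (m⁻¹ * m') y = (χ m y)⁻¹ * χ m' y := by
      rw [map_mul, map_inv]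
      rfl
    rw [hsplit, hu, inv_mul_cancel]
  · rintro ⟨horb, hker⟩
    have horb_eq : orbit G f' = orbit G f := MulAction.orbit_eq_iff.2 horb
    have hstab_eq : stabilizer G f' = stabilizer G f := aux_stab horb
    have hchi : ∀ s ∈ stabilizer G f, ((χ m' s : kˣ) : k) = ((χ m s : kˣ) : k) := by
      intro s hs
      have hm' : m * (m⁻¹ * m') = m' := by group
      have : χ m' s = χ m s * χ (m⁻¹ * m') s := by
        conv_lhs => rw [← hm']
        rw [map_mul]
        rfl
      rw [this, hker s hs, mul_one]
    apply Submodule.ext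
    intro a
    rw [hM f m, hM f' m', aux_mem χ ιB ιG hcomm bA hbA e he hcard f m a,
      aux_mem χ ιB ιG hcomm bA hbA e he hcard f' m' a]
    constructor
    · rintro ⟨c1, c2⟩
      refine ⟨fun p hp => c1 p (fun hin => hp (horb_eq ▸ hin)), fun x g s hs => ?_⟩
      rw [hstab_eq] at hs
      rw [c2 x g s hs, hchi s hs]
    · rintro ⟨c1, c2⟩
      refine ⟨fun p hp => c1 p (fun hin => hp (horb_eq ▸ hin)), fun x g s hs => ?_⟩
      rw [c2 x g s (hstab_eq ▸ hs), hchi s hs]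
end
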